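/- arXiv:2303.05592 — 9 statements merged into one kernel-verified Lean document; each statement's English description precedes it below -/
import Mathlib

section
/- There exist infinitely many complex numbers $z \neq 0$ such that $e^z + e^{1/z} = 1$. -/
open Complex

open Complex Metric Set Real
set_option maxHeartbeats 1000000

lemma log_lip {δ : ℝ} (hδ : 0 < δ) {v₁ v₂ : ℂ} (h1 : δ ≤ v₁.im) (h2 : δ ≤ v₂.im) :
    ‖Complex.log v₁ - Complex.log v₂‖ ≤ δ⁻¹ * ‖v₁ - v₂‖ := by
  have hconv : Convex ℝ {z : ℂ | δ ≤ z.im} := convex_halfSpace_im_ge δ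
  have key := hconv.norm_image_sub_le_of_norm_hasFDerivWithin_le
    (f := Complex.log)
    (f' := fun v => ((1 : ℂ →L[ℂ] ℂ).smulRight v⁻¹).restrictScalars ℝ)
    (fun v hv => by
      have hvim : δ ≤ v.im := hv
      have hv' : v ∈ Complex.slitPlane := Or.inr (lt_of_lt_of_le hδ hvim).ne'
      exact ((Complex.hasDerivAt_log hv').hasFDerivAt.restrictScalars ℝ).hasFDerivWithinAt)
    (fun v hv => by
      have hvim : δ ≤ v.im := hv
      rw [ContinuousLinearMap.norm_restrictScalars, ContinuousLinearMap.norm_smulRight_apply,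
        norm_one]
      have hn1 : ‖v⁻¹‖ = (‖v‖)⁻¹ := by simp
      have hn2 : δ ≤ ‖v‖ := le_trans hvim (le_trans (le_abs_self _) (Complex.abs_im_le_norm v))
      rw [one_mul, hn1]
      exact inv_anti₀ hδ hn2)
    h2 h1
  simpa using key

lemma abs_sub_le' (a b : ℂ) : ‖a - b‖ ≤ ‖a‖ + ‖b‖ := by
  simpa using norm_sub_le a b

lemma exp_lip {a b : ℂ} (ha : ‖a‖ ≤ 1/2) (hb : ‖b‖ ≤ 1/2) :
    ‖Complex.exp a - Complex.exp b‖ ≤ 6 * ‖a - b‖ := by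
  have hfac : Complex.exp a - Complex.exp b = Complex.exp b * (Complex.exp (a - b) - 1) := by
    rw [mul_sub, mul_one, ← Complex.exp_add]; ring_nf
  rw [hfac, norm_mul]
  have h1 : ‖Complex.exp (a - b) - 1‖ ≤ 2 * ‖a - b‖ :=
    Complex.norm_exp_sub_one_le (by
      calc ‖a - b‖ ≤ ‖a‖ + ‖b‖ := abs_sub_le' a b
        _ ≤ 1 := by linarith)
  have h2 : ‖Complex.exp b‖ ≤ 3 := by
    rw [Complex.norm_exp]
    have hre : b.re ≤ 1 := by
      have := Complex.abs_re_le_norm b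
      have := le_abs_self b.re
      linarith
    calc Real.exp b.re ≤ Real.exp 1 := Real.exp_le_exp.2 hre
      _ ≤ 3 := by linarith [Real.exp_one_lt_d9]
  calc ‖Complex.exp b‖ * ‖Complex.exp (a - b) - 1‖
      ≤ 3 * (2 * ‖a - b‖) := by
        apply mul_le_mul h2 h1 (norm_nonneg _) (by norm_num)
    _ = 6 * ‖a - b‖ := by ring

lemma exists_sol (n : ℕ) (hn : 100 ≤ n) :
    ∃ z : ℂ, z ≠ 0 ∧ Complex.exp z + Complex.exp (1 / z) = 1 ∧
      |z.im - (2 * π * n + π / 2)| ≤ 1 / 2 := by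
  set N : ℝ := (n : ℝ) with hNdef
  have hN : (100 : ℝ) ≤ N := by rw [hNdef]; exact_mod_cast hn
  have hπ : 3 < π := Real.pi_gt_three
  have hπ' : π < 3.15 := Real.pi_lt_d2
  set A : ℝ := 2 * π * N with hAdef
  have hA6 : 6 * N ≤ A := by nlinarith
  have hA63 : A ≤ 6.3 * N := by nlinarith
  have hA0 : 0 < A := by nlinarith
  -- sqrt and log bounds
  have hsq0 : 0 ≤ Real.sqrt N := Real.sqrt_nonneg N
  have hsq : Real.sqrt N ≤ N / 10 := by
    have h10 : 10 ≤ Real.sqrt N := by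
      have : Real.sqrt 100 ≤ Real.sqrt N := Real.sqrt_le_sqrt hN
      rwa [show (100:ℝ) = 10 ^ 2 by norm_num, Real.sqrt_sq (by norm_num)] at this
    nlinarith [Real.sq_sqrt (by linarith : (0:ℝ) ≤ N)]
  have hlogA0 : 0 ≤ Real.log A := Real.log_nonneg (by linarith)
  have hlogA : Real.log A ≤ 4 + 2 * Real.sqrt N := by
    have hN0 : (0:ℝ) < N := by linarith
    have h1 : Real.log A = Real.log (2*π) + Real.log N :=
      by rw [hAdef, Real.log_mul (by positivity) (by positivity)]
    have h2 : Real.log (2*π) ≤ 2*π - 1 := Real.log_le_sub_one_of_pos (by positivity)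
    have h3 : Real.log N = 2 * Real.log (Real.sqrt N) := by
      rw [Real.log_sqrt (le_of_lt hN0)]; ring
    have h4 : Real.log (Real.sqrt N) ≤ Real.sqrt N - 1 :=
      Real.log_le_sub_one_of_pos (Real.sqrt_pos.2 hN0)
    nlinarith
  -- the center point
  set q : ℂ := (π/2 : ℝ) + (Real.log A : ℝ) * I with hqdef
  set p : ℂ := I * ((A : ℝ) + q) with hpdef
  have hpre : p.re = -Real.log A := by simp [hpdef, hqdef]
  have hpim : p.im = A + π / 2 := by simp [hpdef, hqdef]
  have hqabs : ‖q‖ ≤ 6 + 2 * Real.sqrt N := by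
    have := Complex.norm_le_abs_re_add_abs_im q
    have hqre : q.re = π/2 := by simp [hqdef]
    have hqim : q.im = Real.log A := by simp [hqdef]
    rw [hqre, hqim] at this
    rw [_root_.abs_of_nonneg (by positivity), _root_.abs_of_nonneg hlogA0] at this
    linarith
  have hpabs_low : 6 * N ≤ ‖p‖ := by
    have h := Complex.abs_im_le_norm p
    rw [hpim] at h
    have : A + π/2 ≤ |A + π/2| := le_abs_self _
    linarith
  have hpabs_up : ‖p‖ ≤ 7 * N - 1/2 := by
    have h := Complex.norm_le_abs_re_add_abs_im p
    rw [hpre, hpim] at h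
    rw [_root_.abs_of_nonpos (by linarith), _root_.abs_of_nonneg (by positivity)] at h
    nlinarith
  set D : Set ℂ := Metric.closedBall p (1/2) with hDdef
  -- basic bounds for points of D
  have hD : ∀ w ∈ D, 6 * N ≤ w.im ∧ 6 * N ≤ ‖w‖ ∧ ‖w‖ ≤ 7 * N := by
    intro w hw
    rw [hDdef, Metric.mem_closedBall, Complex.dist_eq] at hw
    have him : |w.im - p.im| ≤ 1/2 := by
      have := Complex.abs_im_le_norm (w - p)
      rw [Complex.sub_im] at this
      linarith
    have him' : 6 * N ≤ w.im := by
      rw [hpim] at him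
      have := abs_le.1 him
      nlinarith
    refine ⟨him', ?_, ?_⟩
    · have h := Complex.abs_im_le_norm w
      have := le_abs_self w.im
      linarith
    · have htri : ‖w‖ ≤ ‖p‖ + ‖w - p‖ := by
        calc ‖w‖ = ‖p + (w - p)‖ := by ring_nf
          _ ≤ ‖p‖ + ‖w - p‖ := norm_add_le _ _
      linarith
  -- abs of 1/w
  have hN0 : (0:ℝ) < N := by linarith
  have hu : ∀ w ∈ D, ‖1 / w‖ ≤ 1 / (6 * N) := by
    intro w hw
    obtain ⟨-, h1, -⟩ := hD w hw
    rw [norm_div, norm_one]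
    exact one_div_le_one_div_of_le (by positivity) h1
  have hu' : ∀ w ∈ D, ‖1 / w‖ ≤ 1 / 2 := by
    intro w hw
    calc ‖1 / w‖ ≤ 1 / (6 * N) := hu w hw
      _ ≤ 1 / 2 := by rw [div_le_div_iff₀ (by positivity) (by norm_num)]; nlinarith
  have hw0 : ∀ w ∈ D, w ≠ 0 := by
    intro w hw h0
    obtain ⟨-, h1, -⟩ := hD w hw
    rw [h0] at h1; simp at h1; nlinarith
  -- error term bound
  have herr : ∀ w ∈ D, ‖Complex.exp (1/w) - 1 - 1/w‖ ≤ 1 / (36 * N^2) := by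
    intro w hw
    calc ‖Complex.exp (1/w) - 1 - 1/w‖ ≤ ‖1/w‖ ^ 2 :=
          Complex.norm_exp_sub_one_sub_id_le (le_trans (hu' w hw) (by norm_num))
      _ ≤ (1 / (6*N))^2 := pow_le_pow_left₀ (norm_nonneg _) (hu w hw) 2
      _ = 1 / (36 * N^2) := by ring
  -- imaginary part of v = 1 - exp(1/w)
  have hvim : ∀ w ∈ D, 1 / (16 * N) ≤ (1 - Complex.exp (1/w)).im := by
    intro w hw
    obtain ⟨him, habs_low, habs_up⟩ := hD w hw
    have hdecomp : 1 - Complex.exp (1/w) = -(1/w) - (Complex.exp (1/w) - 1 - 1/w) := by ring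
    have h1 : (-(1/w)).im = w.im / Complex.normSq w := by
      rw [one_div, Complex.neg_im, Complex.inv_im]; ring
    have hns : Complex.normSq w ≤ 49 * N^2 := by
      rw [Complex.normSq_eq_norm_sq]; nlinarith
    have hns0 : 0 < Complex.normSq w := Complex.normSq_pos.2 (hw0 w hw)
    have h2 : 6 * N / (49 * N^2) ≤ w.im / Complex.normSq w :=
      div_le_div₀ (by linarith : (0:ℝ) ≤ w.im) him hns0 hns
    have h3 : (Complex.exp (1/w) - 1 - 1/w).im ≤ 1 / (36 * N^2) := by
      have ha := herr w hw
      have := Complex.abs_im_le_norm (Complex.exp (1/w) - 1 - 1/w)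
      have := le_abs_self (Complex.exp (1/w) - 1 - 1/w).im
      linarith
    rw [hdecomp, Complex.sub_im, h1]
    have hfinal : 1 / (16 * N) ≤ 6 * N / (49 * N^2) - 1 / (36 * N^2) := by
      rw [div_sub_div _ _ (by positivity) (by positivity), div_le_div_iff₀ (by positivity) (by positivity)]
      have hcube : (0:ℝ) < N^3 := by positivity
      nlinarith [mul_le_mul_of_nonneg_left hN (le_of_lt hcube)]
    linarith
  -- v is nonzero on D
  have hv0 : ∀ w ∈ D, 1 - Complex.exp (1/w) ≠ 0 := by
    intro w hw h0
    have := hvim w hw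
    rw [h0] at this; simp at this
    have hinv : 0 < N⁻¹ := inv_pos.2 hN0
    nlinarith
  -- the map T
  set T : ℂ → ℂ := fun w => (A : ℝ) * I + Complex.log (1 - Complex.exp (1/w)) with hTdef
  -- Lipschitz estimate
  have hlip : ∀ w₁ ∈ D, ∀ w₂ ∈ D, dist (T w₁) (T w₂) ≤ (1/2) * dist w₁ w₂ := by
    intro w₁ hw₁ w₂ hw₂
    obtain ⟨-, hab1, -⟩ := hD w₁ hw₁
    obtain ⟨-, hab2, -⟩ := hD w₂ hw₂
    have hTsub : T w₁ - T w₂ =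
        Complex.log (1 - Complex.exp (1/w₁)) - Complex.log (1 - Complex.exp (1/w₂)) := by
      rw [hTdef]; ring
    rw [Complex.dist_eq, Complex.dist_eq, hTsub]
    have hlg := log_lip (δ := 1/(16*N)) (by positivity) (hvim w₁ hw₁) (hvim w₂ hw₂)
    have hvv : ‖(1 - Complex.exp (1/w₁)) - (1 - Complex.exp (1/w₂))‖
        = ‖Complex.exp (1/w₂) - Complex.exp (1/w₁)‖ := by ring_nf
    have hev : ‖Complex.exp (1/w₂) - Complex.exp (1/w₁)‖
        ≤ 6 * ‖1/w₂ - 1/w₁‖ := exp_lip (hu' w₂ hw₂) (hu' w₁ hw₁)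
    have huu : ‖1/w₂ - 1/w₁‖ ≤ ‖w₁ - w₂‖ / (36 * N^2) := by
      have hval : 1/w₂ - 1/w₁ = (w₁ - w₂) / (w₁ * w₂) := by
        field_simp [hw0 w₁ hw₁, hw0 w₂ hw₂]
        try exact Or.inl (mul_comm _ _)
      rw [hval, norm_div, norm_mul]
      have h36 : 36 * N^2 ≤ ‖w₁‖ * ‖w₂‖ := by nlinarith
      exact div_le_div₀ (norm_nonneg _) le_rfl (by positivity) h36
    have h16N : ((1:ℝ)/(16*N))⁻¹ = 16 * N := by field_simp
    rw [h16N] at hlg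
    calc ‖Complex.log (1 - Complex.exp (1/w₁)) - Complex.log (1 - Complex.exp (1/w₂))‖
        ≤ 16 * N * ‖(1 - Complex.exp (1/w₁)) - (1 - Complex.exp (1/w₂))‖ := hlg
      _ = 16 * N * ‖Complex.exp (1/w₂) - Complex.exp (1/w₁)‖ := by rw [hvv]
      _ ≤ 16 * N * (6 * ‖1/w₂ - 1/w₁‖) := by
          apply mul_le_mul_of_nonneg_left hev (by positivity)
      _ ≤ 16 * N * (6 * (‖w₁ - w₂‖ / (36 * N^2))) := by
          apply mul_le_mul_of_nonneg_left _ (by positivity)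
          apply mul_le_mul_of_nonneg_left huu (by norm_num)
      _ = (8 / (3 * N)) * ‖w₁ - w₂‖ := by
          field_simp
          ring
      _ ≤ (1/2) * ‖w₁ - w₂‖ := by
          apply mul_le_mul_of_nonneg_right _ (norm_nonneg _)
          rw [div_le_div_iff₀ (by positivity) (by norm_num)]
          nlinarith
  -- p is in D
  have hpD : p ∈ D := mem_closedBall_self (by norm_num)
  have haq : ((A:ℝ):ℂ) + q ≠ 0 := by
    intro h
    apply hw0 p hpD
    rw [hpdef, h, mul_zero]
  -- log of I/A
  have hlogt : Complex.log (I / (A:ℂ)) = ((-Real.log A : ℝ) : ℂ) + ((π/2 : ℝ) : ℂ) * I := by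
    have hIA : I / ((A:ℝ):ℂ) = ((A⁻¹ : ℝ):ℂ) * I := by
      push_cast
      field_simp
    apply Complex.ext
    · rw [Complex.log_re, hIA]
      simp only [norm_mul, Complex.norm_real, Complex.norm_I, mul_one, Real.norm_eq_abs]
      rw [_root_.abs_of_pos (inv_pos.2 hA0), Real.log_inv]
      simp
    · rw [Complex.log_im, hIA, Complex.arg_real_mul I (inv_pos.2 hA0), Complex.arg_I]
      simp
  have hpdecomp : p = ((A:ℝ):ℂ) * I + Complex.log (I / (A:ℂ)) := by
    rw [hlogt, hpdef, hqdef]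
    apply Complex.ext <;> simp
  -- the distance from T p to p
  have htim : 1 / (16 * N) ≤ (I / ((A:ℝ):ℂ)).im := by
    have hIA : I / ((A:ℝ):ℂ) = ((A⁻¹ : ℝ):ℂ) * I := by push_cast; field_simp
    rw [hIA]
    simp only [Complex.mul_im, Complex.ofReal_re, Complex.I_im, Complex.ofReal_im, Complex.I_re,
      mul_one, mul_zero, add_zero]
    rw [show (1:ℝ)/(16*N) = (16*N)⁻¹ by ring]
    exact inv_anti₀ (by positivity) (by nlinarith)
  have halg : -(1/p) - I / ((A:ℝ):ℂ) = q / (((A:ℝ):ℂ) * p) := by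
    rw [hpdef]
    have hA0' : ((A:ℝ):ℂ) ≠ 0 := by exact_mod_cast (Complex.ofReal_ne_zero.2 hA0.ne')
    have h3 : I^(3:ℕ) = -I := by
      rw [pow_succ, Complex.I_sq]; ring
    have h5 : I^(5:ℕ) = I := by
      have h45 : I^(5:ℕ) = (I^2)^2 * I := by ring
      rw [h45, Complex.I_sq]; ring
    have h4 : I^(4:ℕ) = 1 := by
      have h44 : I^(4:ℕ) = (I^2)^2 := by ring
      rw [h44, Complex.I_sq]; ring
    field_simp
    ring_nf
    simp only [h3, h5, h4, Complex.I_sq]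
    push_cast
    ring
  have hTp : dist (T p) p ≤ 1 / 4 := by
    have hTpsub : T p - p = Complex.log (1 - Complex.exp (1/p)) - Complex.log (I / ((A:ℝ):ℂ)) := by
      nth_rewrite 2 [hpdecomp]
      rw [hTdef]
      ring
    rw [Complex.dist_eq, hTpsub]
    have hlg := log_lip (δ := 1/(16*N)) (by positivity) (hvim p hpD) htim
    have h16N : ((1:ℝ)/(16*N))⁻¹ = 16 * N := by field_simp
    rw [h16N] at hlg
    have hsplit : (1 - Complex.exp (1/p)) - I / ((A:ℝ):ℂ)
        = (-(1/p) - I / ((A:ℝ):ℂ)) - (Complex.exp (1/p) - 1 - 1/p) := by ring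
    have habsq : ‖q / (((A:ℝ):ℂ) * p)‖ ≤ (6 + 2 * Real.sqrt N) / (36 * N^2) := by
      rw [norm_div, norm_mul]
      have hA' : ‖((A:ℝ):ℂ)‖ = A := by
        rw [Complex.norm_real, Real.norm_eq_abs, _root_.abs_of_pos hA0]
      rw [hA']
      apply div_le_div₀ (by positivity) hqabs (by nlinarith) (by nlinarith)
    have hvt : ‖(1 - Complex.exp (1/p)) - I / ((A:ℝ):ℂ)‖
        ≤ (7 + 2 * Real.sqrt N) / (36 * N^2) := by
      rw [hsplit]
      calc ‖(-(1/p) - I / ((A:ℝ):ℂ)) - (Complex.exp (1/p) - 1 - 1/p)‖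
          ≤ ‖-(1/p) - I / ((A:ℝ):ℂ)‖ + ‖Complex.exp (1/p) - 1 - 1/p‖ := by
            exact abs_sub_le' _ _
        _ ≤ (6 + 2 * Real.sqrt N) / (36 * N^2) + 1 / (36 * N^2) := by
            rw [halg]
            exact add_le_add habsq (herr p hpD)
        _ = (7 + 2 * Real.sqrt N) / (36 * N^2) := by ring
    calc ‖Complex.log (1 - Complex.exp (1/p)) - Complex.log (I / ((A:ℝ):ℂ))‖
        ≤ 16 * N * ‖(1 - Complex.exp (1/p)) - I / ((A:ℝ):ℂ)‖ := hlg
      _ ≤ 16 * N * ((7 + 2 * Real.sqrt N) / (36 * N^2)) := by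
          apply mul_le_mul_of_nonneg_left hvt (by positivity)
      _ ≤ 1/4 := by
          rw [show 16 * N * ((7 + 2 * Real.sqrt N) / (36 * N^2)) = (16 * (7 + 2 * Real.sqrt N)) / (36 * N) by
            field_simp]
          rw [div_le_div_iff₀ (by positivity) (by norm_num)]
          nlinarith
  -- T maps D into D
  have hmaps : MapsTo T D D := by
    intro w hw
    rw [hDdef, Metric.mem_closedBall]
    have h1 := hlip w hw p hpD
    have h2 : dist w p ≤ 1/2 := by rwa [hDdef, Metric.mem_closedBall] at hw
    calc dist (T w) p ≤ dist (T w) (T p) + dist (T p) p := dist_triangle _ _ _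
      _ ≤ (1/2) * (1/2) + 1/4 := by
          apply add_le_add _ hTp
          calc dist (T w) (T p) ≤ (1/2) * dist w p := h1
            _ ≤ (1/2) * (1/2) := by linarith
      _ = 1/2 := by norm_num
  -- contraction
  have hlipOn : LipschitzOnWith (1/2 : NNReal) T D := by
    apply LipschitzOnWith.of_dist_le_mul
    intro x hx y hy
    have := hlip x hx y hy
    calc dist (T x) (T y) ≤ (1/2) * dist x y := this
      _ = ((1/2 : NNReal) : ℝ) * dist x y := by norm_num
  have hcontr : ContractingWith (1/2 : NNReal) (hmaps.restrict T D D) :=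
    ⟨by rw [← NNReal.coe_lt_coe]; norm_num, hlipOn.mapsToRestrict hmaps⟩
  obtain ⟨z, hzD, hfix, -, -⟩ := ContractingWith.exists_fixedPoint'
    (Metric.isClosed_closedBall.isComplete) hmaps hcontr hpD (edist_ne_top _ _)
  -- conclude
  refine ⟨z, hw0 z hzD, ?_, ?_⟩
  · have hfix' : T z = z := hfix
    have hvz0 := hv0 z hzD
    have hexpA : Complex.exp (((A:ℝ):ℂ) * I) = 1 := by
      have hcast : (((A:ℝ):ℂ)) * I = (n : ℤ) * (2 * (π:ℂ) * I) := by
        rw [hAdef, hNdef]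
        push_cast
        ring
      rw [hcast]
      exact Complex.exp_int_mul_two_pi_mul_I n
    have hexpz : Complex.exp z = 1 - Complex.exp (1/z) := by
      conv_lhs => rw [← hfix']
      rw [hTdef]
      simp only []
      rw [Complex.exp_add, hexpA, one_mul, Complex.exp_log hvz0]
    rw [hexpz]
    ring
  · rw [hDdef, Metric.mem_closedBall, Complex.dist_eq] at hzD
    have := Complex.abs_im_le_norm (z - p)
    rw [Complex.sub_im, hpim] at this
    exact le_trans this hzD

/-- There are infinitely many nonzero complex `z` with `e^z + e^(1/z) = 1`. -/
theorem infinite_solutions_exp_exp_inv :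
    {z : ℂ | z ≠ 0 ∧ Complex.exp z + Complex.exp (1 / z) = 1}.Infinite := by
  have key : ∀ k : ℕ, ∃ z : ℂ,
      (z ≠ 0 ∧ Complex.exp z + Complex.exp (1 / z) = 1) ∧
      |z.im - (2 * π * ((k : ℝ) + 100) + π / 2)| ≤ 1 / 2 := by
    intro k
    obtain ⟨z, h1, h2, h3⟩ := exists_sol (k + 100) (by omega)
    refine ⟨z, ⟨h1, h2⟩, ?_⟩
    push_cast at h3
    convert h3 using 3
  choose f hf him using key
  refine Set.infinite_of_injective_forall_mem (f := f) ?_ (fun a => hf a)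
  intro a b hab
  by_contra hne
  have ha := him a
  have hb := him b
  rw [hab] at ha
  have h1 := abs_le.1 ha
  have h2 := abs_le.1 hb
  have hπ : 3 < π := Real.pi_gt_three
  have hd : (1:ℝ) ≤ |(a:ℝ) - b| := by
    have hz : ((a:ℤ)) ≠ (b:ℤ) := by exact_mod_cast hne
    have := Int.one_le_abs (sub_ne_zero.2 hz)
    calc (1:ℝ) ≤ |((a - b : ℤ) : ℝ)| := by
          rw [← Int.cast_abs]; exact_mod_cast this
      _ = |(a:ℝ) - b| := by push_cast; ring_nf
  rw [le_abs] at hd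
  rcases hd with h | h <;> nlinarith [h1.1, h1.2, h2.1, h2.2]
end

section
/- The set of complex numbers $z$ with $e^z = z$ is infinite. -/
open Real Set

private lemma aux_sin_cos {n : ℕ} {y : ℝ}
    (hy : y ∈ Icc (2*π*(n+1) + π/4) (2*π*(n+1) + π/2)) :
    Real.sqrt 2 / 2 ≤ Real.sin y ∧ 0 ≤ Real.cos y := by
  have hπ := Real.pi_pos
  set t := y - 2*π*(n+1) with ht
  have hyt : y = t + (n+1 : ℕ) * (2*π) := by push_cast; ring
  have ht1 : π/4 ≤ t := by simp only [ht]; linarith [hy.1]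
  have ht2 : t ≤ π/2 := by simp only [ht]; linarith [hy.2]
  have hsin : Real.sin y = Real.sin t := by rw [hyt, Real.sin_add_nat_mul_two_pi]
  have hcos : Real.cos y = Real.cos t := by rw [hyt, Real.cos_add_nat_mul_two_pi]
  constructor
  · rw [hsin, ← Real.sin_pi_div_four]
    exact Real.strictMonoOn_sin.monotoneOn ⟨by linarith, by linarith⟩ ⟨by linarith, ht2⟩ ht1
  · rw [hcos]
    exact Real.cos_nonneg_of_mem_Icc ⟨by linarith, ht2⟩

private lemma aux_exists_fixed (n : ℕ) : ∃ z : ℂ, Complex.exp z = z ∧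
    z.im ∈ Icc (2*π*(n+1) + π/4) (2*π*(n+1) + π/2) := by
  have hπ := Real.pi_pos
  set a := 2*π*(n+1) + π/4 with ha
  set b := 2*π*(n+1) + π/2 with hb
  have hn1 : (1:ℝ) ≤ (n:ℝ) + 1 := by linarith [Nat.cast_nonneg (α:=ℝ) n]
  have h2π : 2*π*(n+1) ≥ 2*π := by nlinarith
  have h1a : (1:ℝ) < a := by rw [ha]; nlinarith [Real.pi_gt_three]
  have hab : a ≤ b := by rw [ha, hb]; linarith
  have h1b : (1:ℝ) < b := lt_of_lt_of_le h1a hab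
  set h : ℝ → ℝ := fun y => y * Real.cos y - Real.sin y * Real.log (y / Real.sin y) with hdef
  clear_value a b h
  have hs2 : (0:ℝ) < Real.sqrt 2 / 2 := by positivity
  have hsinpos : ∀ y ∈ Icc a b, 0 < Real.sin y := by
    intro y hy
    rw [ha, hb] at hy
    exact lt_of_lt_of_le hs2 (aux_sin_cos hy).1
  have hypos : ∀ y ∈ Icc a b, 0 < y := fun y hy => lt_trans (by linarith) (lt_of_lt_of_le h1a hy.1)
  have hcont : ContinuousOn h (Icc a b) := by
    rw [hdef]
    apply ContinuousOn.sub
    · exact continuousOn_id.mul Real.continuous_cos.continuousOn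
    · apply Real.continuous_sin.continuousOn.mul
      apply ContinuousOn.log
      · exact continuousOn_id.div Real.continuous_sin.continuousOn
          (fun y hy => (hsinpos y hy).ne')
      · exact fun y hy => (div_pos (hypos y hy) (hsinpos y hy)).ne'
  have hsinb : Real.sin b = 1 := by
    have : b = π/2 + (n+1 : ℕ) * (2*π) := by rw [hb]; push_cast; ring
    rw [this, Real.sin_add_nat_mul_two_pi, Real.sin_pi_div_two]
  have hcosb : Real.cos b = 0 := by
    have : b = π/2 + (n+1 : ℕ) * (2*π) := by rw [hb]; push_cast; ring
    rw [this, Real.cos_add_nat_mul_two_pi, Real.cos_pi_div_two]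
  have hsina : Real.sin a = Real.sqrt 2 / 2 := by
    have : a = π/4 + (n+1 : ℕ) * (2*π) := by rw [ha]; push_cast; ring
    rw [this, Real.sin_add_nat_mul_two_pi, Real.sin_pi_div_four]
  have hcosa : Real.cos a = Real.sqrt 2 / 2 := by
    have : a = π/4 + (n+1 : ℕ) * (2*π) := by rw [ha]; push_cast; ring
    rw [this, Real.cos_add_nat_mul_two_pi, Real.cos_pi_div_four]
  have hhb : h b ≤ 0 := by
    simp only [hdef, hsinb, hcosb]
    have : 0 ≤ Real.log b := Real.log_nonneg (le_of_lt h1b)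
    simp only [div_one, mul_zero, one_mul]
    linarith
  have hha : 0 ≤ h a := by
    simp only [hdef, hsina, hcosa]
    have hlog : Real.log (a / (Real.sqrt 2 / 2)) ≤ a := by
      rw [Real.log_div (by linarith) hs2.ne']
      have h1 : Real.log a ≤ a - 1 := Real.log_le_sub_one_of_pos (by linarith)
      have h2 : -1 ≤ Real.log (Real.sqrt 2 / 2) := by
        rw [← Real.log_exp (-1)]
        apply Real.log_le_log (Real.exp_pos _)
        rw [Real.exp_neg]
        have : Real.exp 1 > 2 := by
          have := Real.exp_one_gt_d9; linarith
        have hinv : (Real.exp 1)⁻¹ ≤ 1/2 := by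
          rw [inv_le_comm₀ (Real.exp_pos 1) (by norm_num)]
          linarith
        have : (1:ℝ)/2 ≤ Real.sqrt 2 / 2 := by
          have : (1:ℝ) ≤ Real.sqrt 2 := by
            rw [show (1:ℝ) = Real.sqrt 1 by simp]
            exact Real.sqrt_le_sqrt (by norm_num)
          linarith
        linarith
      linarith
    nlinarith
  obtain ⟨y, hy, hy0⟩ := intermediate_value_Icc' hab hcont ⟨hhb, hha⟩
  have hsy : 0 < Real.sin y := hsinpos y hy
  have hyp : 0 < y := hypos y hy
  set s := Real.sin y with hsdef
  set x := Real.log (y / s) with hx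
  have hex : Real.exp x = y / s := Real.exp_log (div_pos hyp hsy)
  have hre : y / s * Real.cos y = x := by
    have : y * Real.cos y = s * x := by
      simp only [hdef] at hy0; linarith
    field_simp
    linarith [this]
  refine ⟨(x:ℂ) + (y:ℂ) * Complex.I, ?_, ?_, ?_⟩
  · rw [Complex.exp_add, Complex.exp_mul_I, ← Complex.ofReal_exp,
      ← Complex.ofReal_cos, ← Complex.ofReal_sin, hex]
    rw [mul_add, ← Complex.ofReal_mul, hre, ← mul_assoc, ← Complex.ofReal_mul,
      div_mul_cancel₀ _ hsy.ne']
  · simpa using hy.1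
  · simpa using hy.2

/-- The set of complex numbers `z` with `e^z = z` is infinite. -/
theorem infinite_exp_fixed_points : {z : ℂ | Complex.exp z = z}.Infinite := by
  have hπ := Real.pi_pos
  choose f hf hf1 hf2 using aux_exists_fixed
  refine Set.infinite_of_injective_forall_mem (f := f) ?_ (fun n => hf n)
  · have him : StrictMono fun n => (f n).im := by
      intro m n hlt
      have h1 : (f m).im ≤ 2*π*(m+1) + π/2 := hf2 m
      have h2 : 2*π*(n+1) + π/4 ≤ (f n).im := hf1 n
      have hmn' : (m:ℝ) + 1 ≤ (n:ℝ) := by exact_mod_cast hlt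
      simp only
      nlinarith
    intro m n hmn
    exact him.injective (by rw [hmn])
end

section
/- There do not exist complex numbers $a, b$ such that $e^z - z = e^{az+b}$ for all complex $z$. -/
/-- There are no complex `a, b` with `e^z - z = e^(a z + b)` for all complex `z`. -/
theorem no_linear_exp_representation :
    ¬ ∃ a b : ℂ, ∀ z : ℂ, Complex.exp z - z = Complex.exp (a * z + b) := by
  rintro ⟨a, b, h⟩
  set c : ℂ := 2 * Real.pi * Complex.I with hc
  have hcne : c ≠ 0 := by
    simp [hc, Real.pi_ne_zero, Complex.I_ne_zero, Complex.ofReal_ne_zero]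
  have hec : Complex.exp c = 1 := by
    simpa [hc] using Complex.exp_two_pi_mul_I
  have h0 : Complex.exp b = 1 := by
    have := h 0
    simpa using this.symm
  have h1 : Complex.exp (a * c + b) = 1 - c := by
    have := h c
    rw [hec] at this
    exact this.symm
  have h2 : Complex.exp (a * (c + c) + b) = 1 - (c + c) := by
    have := h (c + c)
    rw [Complex.exp_add, hec, one_mul] at this
    exact this.symm
  have key : Complex.exp (a * (c + c) + b) * Complex.exp b
      = Complex.exp (a * c + b) * Complex.exp (a * c + b) := by
    rw [← Complex.exp_add, ← Complex.exp_add]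
    ring_nf
  rw [h0, h1, h2, mul_one] at key
  have : c * c = 0 := by ring_nf at key ⊢; linear_combination -key
  exact hcne (by simpa using mul_self_eq_zero.mp this)
end

section
/- There do not exist complex numbers $a, b, c$ such that $e^z + e^{z^2} - 1 = e^{az^2 + bz + c}$ for all complex $z$. -/
/-- Numeric contradiction: the real identity forced by evaluating at `z = 0, ±1, ±2`
cannot hold for `e = exp 1`. -/
lemma key_ineq (e : ℝ) (h1 : 2.7182818283 < e) (h2 : e < 2.7182818286) :
    ((2*e-1)*(e⁻¹+e-1))^4 ≠ (e^2+e^4-1)*((e^2)⁻¹+e^4-1) := by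
  have hep : (0:ℝ) < e := by linarith
  intro h
  field_simp at h
  have e1l : (2.71:ℝ) < e := by linarith
  have e1u : e < 2.72 := by linarith
  have e2l : (7.3441:ℝ) < e^2 := by nlinarith
  have e2u : e^2 < 7.3984 := by nlinarith
  have e4l : (53.93:ℝ) < e^4 := by nlinarith
  have e4u : e^4 < 54.74 := by nlinarith
  have e6u : e^6 < 405 := by nlinarith
  have hA : (24.85:ℝ) < (2*e-1)*(1+e*e-e) := by nlinarith
  have hA2 : (617:ℝ) < ((2*e-1)*(1+e*e-e))^2 := by nlinarith
  have hA4 : (380000:ℝ) < ((2*e-1)*(1+e*e-e))^4 := by nlinarith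
  have hL : (2700000:ℝ) < ((2*e-1)*(1+e*e-e))^4 * e^2 := by nlinarith
  have hR : (e^2+e^4-1) * (1 + e^4*e^2 - e^2) * e^4 < 1400000 := by
    nlinarith [sq_nonneg e, mul_pos (pow_pos hep 2) (pow_pos hep 4)]
  have h' : ((2*e-1)*(1+e*e-e))^4 * e^2 = (e^2+e^4-1) * (1 + e^4*e^2 - e^2) * e^4 := by
    linear_combination (e^2) * h
  linarith [h' ▸ hL]

/-- There are no complex `a, b, c` with `e^z + e^(z^2) - 1 = e^(a z^2 + b z + c)`
for all complex `z`. -/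
theorem no_quadratic_exp_representation :
    ¬ ∃ a b c : ℂ, ∀ z : ℂ,
      Complex.exp z + Complex.exp (z ^ 2) - 1 = Complex.exp (a * z ^ 2 + b * z + c) := by
  open Complex in
  rintro ⟨a, b, c, h⟩
  have h0 := h 0
  have h1 := h 1
  have h2 := h (-1)
  have h3 := h 2
  have h4 := h (-2)
  norm_num at h0 h1 h2 h3 h4
  have keyC : ((cexp 1 + cexp 1 - 1) * (cexp (-1) + cexp 1 - 1))^4
      = (cexp 2 + cexp 4 - 1) * (cexp (-2) + cexp 4 - 1) := by
    rw [h1, h2, h3, h4, ← Complex.exp_add, ← Complex.exp_add, ← Complex.exp_nat_mul]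
    rw [show ((4:ℕ):ℂ) * ((a + b + c) + (a + -b + c))
        = (a*4 + b*2 + c + (a*4 + -(b*2) + c)) + (c+(c+(c+(c+(c+c))))) by push_cast; ring]
    simp [Complex.exp_add, ← h0]
  have e2 : cexp 2 = cexp 1 ^ 2 := by
    rw [show (2:ℂ) = 1+1 by norm_num, Complex.exp_add]; ring
  have e4 : cexp 4 = cexp 1 ^ 4 := by
    rw [show (4:ℂ) = 1+1+(1+1) by norm_num, Complex.exp_add, Complex.exp_add]; ring
  have em1 : cexp (-1) = (cexp 1)⁻¹ := Complex.exp_neg 1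
  have em2 : cexp (-2) = (cexp 1 ^ 2)⁻¹ := by rw [Complex.exp_neg, e2]
  rw [em1, e2, e4, em2] at keyC
  have keyC' : ((2*cexp 1 - 1) * ((cexp 1)⁻¹ + cexp 1 - 1))^4
      = ((cexp 1)^2 + (cexp 1)^4 - 1) * (((cexp 1)^2)⁻¹ + (cexp 1)^4 - 1) := by
    linear_combination keyC
  have hreal : ((2*Real.exp 1-1)*((Real.exp 1)⁻¹+Real.exp 1-1))^4
      = ((Real.exp 1)^2+(Real.exp 1)^4-1)*(((Real.exp 1)^2)⁻¹+(Real.exp 1)^4-1) := by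
    apply Complex.ofReal_injective
    push_cast
    exact keyC'
  exact key_ineq (Real.exp 1) Real.exp_one_gt_d9 Real.exp_one_lt_d9 hreal
end

section
/- Borel–Carathéodory inequality: if $0 \le r < R$ and $\phi_0$ is analytic on the closed disc $|w| \le R$, then $\sup_{|w| \le r} |\phi_0(w)| \le \frac{2r}{R-r} \sup_{|w| \le R} \Re \phi_0(w) + \frac{R+r}{R-r} |\phi_0(0)|$. -/
open Complex Metric

/-- Core Borel–Carathéodory estimate for a function vanishing at `0`, with a strict
upper bound on the real part. -/
lemma borel_caratheodory_core (r R M : ℝ) (hr : 0 ≤ r) (hrR : r < R) (hM : 0 < M)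
    (φ : ℂ → ℂ) (hd : DifferentiableOn ℂ φ (closedBall (0 : ℂ) R)) (h0 : φ 0 = 0)
    (hRe : ∀ w ∈ closedBall (0 : ℂ) R, (φ w).re < M) :
    ∀ w ∈ closedBall (0 : ℂ) r, ‖φ w‖ ≤ 2 * r / (R - r) * M := by
  intro w hw
  have hR : 0 < R := lt_of_le_of_lt hr hrR
  set f : ℂ → ℂ := fun z => φ z / (2 * M - φ z) with hf
  have hsub : ball (0 : ℂ) R ⊆ closedBall (0 : ℂ) R := ball_subset_closedBall
  have hden : ∀ z ∈ closedBall (0 : ℂ) R, (2 * (M : ℂ) - φ z) ≠ 0 := by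
    intro z hz hzero
    have h1 : (2 * (M : ℂ) - φ z).re = 2 * M - (φ z).re := by simp
    have := hRe z hz
    rw [hzero] at h1
    simp at h1
    linarith
  have hfd : DifferentiableOn ℂ f (ball (0 : ℂ) R) := by
    apply DifferentiableOn.div
    · exact hd.mono hsub
    · exact (differentiableOn_const _).sub (hd.mono hsub)
    · intro z hz; exact hden z (hsub hz)
  have hf0 : f 0 = 0 := by simp [hf, h0]
  -- |f| < 1 on the open ball
  have hmaps : Set.MapsTo f (ball (0 : ℂ) R) (ball (0 : ℂ) 1) := by
    intro z hz
    rw [mem_ball_zero_iff]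
    have hz' : z ∈ closedBall (0 : ℂ) R := hsub hz
    have hden' := hden z hz'
    have e1 : ‖φ z‖ ^ 2 = (φ z).re ^ 2 + (φ z).im ^ 2 := by
      rw [Complex.sq_norm, Complex.normSq_apply]; ring
    have e2 : ‖2 * (M : ℂ) - φ z‖ ^ 2 = (2 * M - (φ z).re) ^ 2 + (φ z).im ^ 2 := by
      rw [Complex.sq_norm, Complex.normSq_apply]
      simp [Complex.sub_re, Complex.sub_im]
      ring
    have hlt : ‖φ z‖ < ‖2 * (M : ℂ) - φ z‖ := by
      have hsq : ‖φ z‖ ^ 2 < ‖2 * (M : ℂ) - φ z‖ ^ 2 := by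
        rw [e1, e2]; nlinarith [hRe z hz']
      exact lt_of_pow_lt_pow_left₀ 2 (norm_nonneg _) hsq
    rw [hf]
    simp only [norm_div]
    rw [div_lt_one (norm_pos_iff.mpr hden')]
    exact hlt
  -- Schwarz lemma
  have hwR : w ∈ ball (0 : ℂ) R := by
    rw [mem_ball_zero_iff]
    exact lt_of_le_of_lt (mem_closedBall_zero_iff.mp hw) hrR
  have hschwarz : ‖f w‖ ≤ r / R := by
    have := Complex.dist_le_div_mul_dist_of_mapsTo_ball hfd (by rw [hf0]; exact hmaps.mono_right ball_subset_closedBall) hwR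
    rw [hf0] at this
    simp only [dist_zero_right] at this
    calc ‖f w‖ ≤ 1 / R * ‖w‖ := this
      _ ≤ 1 / R * r := by
          apply mul_le_mul_of_nonneg_left (mem_closedBall_zero_iff.mp hw) (by positivity)
      _ = r / R := by ring
  -- recover φ from f: φ w * (1 + f w) = 2M * f w
  have hkey : φ w * (1 + f w) = 2 * M * f w := by
    have hden' := hden w (hsub hwR)
    rw [hf]
    field_simp
    ring
  have hfw1 : ‖f w‖ < 1 := lt_of_le_of_lt hschwarz (by rw [div_lt_one hR]; exact hrR)
  have h1f : 1 - r / R ≤ ‖1 + f w‖ := by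
    have h1 : (1 : ℝ) ≤ ‖1 + f w‖ + ‖f w‖ := by
      calc (1 : ℝ) = ‖(1 + f w) - f w‖ := by norm_num
        _ ≤ ‖1 + f w‖ + ‖f w‖ := norm_sub_le _ _
    linarith [hschwarz]
  have hnorm : ‖φ w‖ * (1 - r / R) ≤ 2 * M * (r / R) := by
    calc ‖φ w‖ * (1 - r / R) ≤ ‖φ w‖ * ‖1 + f w‖ := by
          apply mul_le_mul_of_nonneg_left h1f (norm_nonneg _)
      _ = ‖φ w * (1 + f w)‖ := (norm_mul _ _).symm
      _ = ‖2 * (M : ℂ) * f w‖ := by rw [hkey]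
      _ = 2 * M * ‖f w‖ := by
          rw [show (2 : ℂ) * M = ((2 * M : ℝ) : ℂ) by push_cast; ring, norm_mul,
            Complex.norm_real, Real.norm_eq_abs, abs_of_pos (by linarith)]
      _ ≤ 2 * M * (r / R) := by
          apply mul_le_mul_of_nonneg_left hschwarz (by linarith)
  have hpos : 0 < 1 - r / R := by
    rw [sub_pos, div_lt_one hR]; exact hrR
  rw [← le_div_iff₀ hpos] at hnorm
  calc ‖φ w‖ ≤ 2 * M * (r / R) / (1 - r / R) := hnorm
    _ = 2 * r / (R - r) * M := by
        field_simp

/-- Borel–Carathéodory inequality: if `0 ≤ r < R` and `φ₀` is analytic on the closed disc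
`|w| ≤ R`, then `sup_{|w| ≤ r} |φ₀ w| ≤ (2r/(R-r)) · sup_{|w| ≤ R} Re φ₀ w
+ ((R+r)/(R-r)) · |φ₀ 0|` (formulated with an arbitrary upper bound `A` for the
real part on the large disc). -/
theorem borel_caratheodory (r R : ℝ) (hr : 0 ≤ r) (hrR : r < R) (φ₀ : ℂ → ℂ)
    (hφ₀ : AnalyticOnNhd ℂ φ₀ (closedBall (0 : ℂ) R))
    (A : ℝ) (hA : ∀ w ∈ closedBall (0 : ℂ) R, (φ₀ w).re ≤ A) :
    ∀ w ∈ closedBall (0 : ℂ) r,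
      ‖φ₀ w‖ ≤ 2 * r / (R - r) * A + (R + r) / (R - r) * ‖φ₀ 0‖ := by
  intro w hw
  have hR : 0 < R := lt_of_le_of_lt hr hrR
  have h0R : (0 : ℂ) ∈ closedBall (0 : ℂ) R := by
    simp [mem_closedBall_zero_iff, hR.le]
  set φ : ℂ → ℂ := fun z => φ₀ z - φ₀ 0 with hφ
  have hd : DifferentiableOn ℂ φ (closedBall (0 : ℂ) R) :=
    (hφ₀.differentiableOn).sub (differentiableOn_const _)
  set M₀ : ℝ := A - (φ₀ 0).re with hM₀
  have hM₀0 : 0 ≤ M₀ := by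
    have := hA 0 h0R
    rw [hM₀]; linarith
  have hc : 0 ≤ 2 * r / (R - r) := by
    apply div_nonneg (by linarith) (by linarith)
  -- For every ε > 0, apply the core lemma with M = M₀ + ε'
  have hφw : ‖φ w‖ ≤ 2 * r / (R - r) * M₀ := by
    refine le_of_forall_pos_le_add fun ε hε => ?_
    have hc1 : (0 : ℝ) < 2 * r / (R - r) + 1 := by linarith
    set ε' : ℝ := ε / (2 * r / (R - r) + 1) with hε'def
    have hε'pos : 0 < ε' := by positivity
    have hb := borel_caratheodory_core r R (M₀ + ε') hr hrR (by linarith) φ hd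
      (by simp [hφ])
      (by
        intro z hz
        have := hA z hz
        simp only [hφ, Complex.sub_re]
        have h2 : M₀ = A - (φ₀ 0).re := hM₀
        linarith) w hw
    have hεle : 2 * r / (R - r) * ε' ≤ ε := by
      rw [hε'def, mul_div_assoc', div_le_iff₀ hc1]
      nlinarith
    rw [mul_add] at hb
    linarith
  -- Combine
  have htri : ‖φ₀ w‖ ≤ ‖φ w‖ + ‖φ₀ 0‖ := by
    have h3 : φ₀ w = φ w + φ₀ 0 := by rw [hφ]; ring
    rw [h3]; exact norm_add_le _ _
  have hre : -(‖φ₀ 0‖) ≤ (φ₀ 0).re := by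
    have := Complex.abs_re_le_norm (φ₀ 0)
    rw [abs_le] at this
    exact this.1
  have hcoef : (R + r) / (R - r) = 2 * r / (R - r) + 1 := by
    have hne : R - r ≠ 0 := by linarith
    field_simp
    ring
  calc ‖φ₀ w‖ ≤ ‖φ w‖ + ‖φ₀ 0‖ := htri
    _ ≤ 2 * r / (R - r) * M₀ + ‖φ₀ 0‖ := by linarith
    _ = 2 * r / (R - r) * A + 2 * r / (R - r) * (-(φ₀ 0).re) + ‖φ₀ 0‖ := by
        rw [hM₀]; ring
    _ ≤ 2 * r / (R - r) * A + 2 * r / (R - r) * ‖φ₀ 0‖ + ‖φ₀ 0‖ := by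
        have : 2 * r / (R - r) * (-(φ₀ 0).re) ≤ 2 * r / (R - r) * ‖φ₀ 0‖ :=
          mul_le_mul_of_nonneg_left (by linarith) hc
        linarith
    _ = 2 * r / (R - r) * A + (R + r) / (R - r) * ‖φ₀ 0‖ := by
        rw [hcoef]; ring
end

section
/- Punctured Borel–Carathéodory: let $\phi$ be analytic on a punctured neighbourhood of $0$ in $\mathbf{C}$ on which $\Re\phi(z) \le c/|z|^\kappa$ for some real constants $c, \kappa \ge 0$. Then there is a punctured neighbourhood of $0$ and a real constant $c'$ such that $|\phi(z)| \le c'/|z|^{\kappa+1}$ on it. -/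
open Complex Metric

lemma bc_aux {h : ℂ → ℂ} (hd : Differentiable ℂ h) {A r : ℝ} (hr : 0 < r)
    (hA : 0 < A) (hre : ∀ v : ℂ, ‖v‖ < 2 * r → (h v).re < A) (h0 : h 0 = 0) :
    ∀ u : ℂ, ‖u‖ ≤ r → ‖h u‖ ≤ 2 * A := by
  intro u hu
  set g : ℂ → ℂ := fun v => h v / (2 * A - h v) with hg
  have key : ∀ v : ℂ, ‖v‖ < 2 * r → ‖h v‖ < ‖(2 * A : ℂ) - h v‖ := by
    intro v hv
    have h1 : (h v).re < A := hre v hv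
    have e1 : ‖h v‖ ^ 2 = Complex.normSq (h v) := by
      rw [Complex.sq_norm]
    have e2 : ‖(2 * A : ℂ) - h v‖ ^ 2 = Complex.normSq ((2 * A : ℂ) - h v) := by
      rw [Complex.sq_norm]
    have e3 : Complex.normSq ((2 * A : ℂ) - h v) - Complex.normSq (h v)
        = 4 * A * (A - (h v).re) := by
      simp [Complex.normSq_apply, Complex.sub_re, Complex.sub_im, Complex.mul_re,
        Complex.mul_im]
      ring
    nlinarith [norm_nonneg (h v), norm_nonneg ((2 * A : ℂ) - h v)]
  have hden : ∀ v : ℂ, ‖v‖ < 2 * r → (2 * A : ℂ) - h v ≠ 0 := by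
    intro v hv hz
    have := key v hv
    rw [hz, norm_zero] at this
    exact absurd this (not_lt.mpr (norm_nonneg _))
  have hgd : DifferentiableOn ℂ g (ball 0 (2 * r)) := by
    apply DifferentiableOn.div hd.differentiableOn
      ((differentiableOn_const _).sub hd.differentiableOn)
    intro v hv
    exact hden v (mem_ball_zero_iff.mp hv)
  have hg0 : g 0 = 0 := by simp [hg, h0]
  have hmaps : Set.MapsTo g (ball 0 (2 * r)) (ball (g 0) 1) := by
    intro v hv
    rw [hg0, mem_ball_zero_iff]
    have hk := key v (mem_ball_zero_iff.mp hv)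
    have hpos : 0 < ‖(2 * A : ℂ) - h v‖ := lt_of_le_of_lt (norm_nonneg _) hk
    simp only [hg, norm_div]
    exact (div_lt_one hpos).mpr hk
  have hub : u ∈ ball (0 : ℂ) (2 * r) := by
    rw [mem_ball_zero_iff]; linarith
  have hs := Complex.dist_le_div_mul_dist_of_mapsTo_ball hgd (hmaps.mono_right ball_subset_closedBall) hub
  rw [hg0, dist_zero_right, dist_zero_right] at hs
  have hgu : ‖g u‖ ≤ 1 / 2 := by
    calc ‖g u‖ ≤ 1 / (2 * r) * ‖u‖ := hs
    _ ≤ 1 / (2 * r) * r := by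
        apply mul_le_mul_of_nonneg_left hu
        positivity
    _ = 1 / 2 := by field_simp
  have hdu : (2 * A : ℂ) - h u ≠ 0 := hden u (mem_ball_zero_iff.mp hub)
  have heq : h u * (1 + g u) = 2 * A * g u := by
    rw [hg]
    field_simp
    ring
  have h1g : (1 : ℝ) / 2 ≤ ‖1 + g u‖ := by
    have t := norm_add_le (1 + g u) (-g u)
    simp only [add_neg_cancel_right, norm_neg, norm_one] at t
    linarith
  have hnn : ‖h u‖ * ‖1 + g u‖ = 2 * A * ‖g u‖ := by
    rw [← norm_mul, heq]
    rw [norm_mul]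
    congr 1
    have : ((2 : ℂ) * A) = ((2 * A : ℝ) : ℂ) := by push_cast; ring
    rw [this, Complex.norm_real]
    exact abs_of_pos (by linarith)
  nlinarith [norm_nonneg (h u), norm_nonneg (g u)]


/-- Punctured Borel–Carathéodory: if `φ` is analytic on a punctured neighbourhood
`0 < |z| ≤ 2δ` of `0` on which `Re φ z ≤ c / |z|^κ` for reals `c, κ ≥ 0`, then on some
punctured neighbourhood of `0` we have `|φ z| ≤ c' / |z|^(κ+1)` for some real `c'`. -/
theorem punctured_borel_caratheodory (c κ : ℝ) (hc : 0 ≤ c) (hκ : 0 ≤ κ)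
    (δ : ℝ) (hδ : 0 < δ) (φ : ℂ → ℂ)
    (hφ : AnalyticOnNhd ℂ φ {z : ℂ | 0 < ‖z‖ ∧ ‖z‖ ≤ 2 * δ})
    (hre : ∀ z : ℂ, 0 < ‖z‖ → ‖z‖ ≤ 2 * δ → (φ z).re ≤ c / ‖z‖ ^ κ) :
    ∃ δ' c' : ℝ, 0 < δ' ∧
      ∀ z : ℂ, 0 < ‖z‖ → ‖z‖ ≤ δ' → ‖φ z‖ ≤ c' / ‖z‖ ^ (κ + 1) := by
  have h2δ : 0 < 2 * δ := by linarith
  set r₀ : ℝ := (2 * δ)⁻¹ with hr₀def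
  have hr₀ : 0 < r₀ := by positivity
  set Φ : ℂ → ℂ := fun u => φ u⁻¹ with hΦdef
  have hne0 : ∀ u : ℂ, r₀ ≤ ‖u‖ → u ≠ 0 := by
    intro u hu h0
    rw [h0, norm_zero] at hu; linarith
  have hinv : ∀ u : ℂ, r₀ ≤ ‖u‖ → 0 < ‖u⁻¹‖ ∧ ‖u⁻¹‖ ≤ 2 * δ := by
    intro u hu
    have hu0 : u ≠ 0 := hne0 u hu
    have hnu : 0 < ‖u‖ := norm_pos_iff.mpr hu0
    refine ⟨by rw [norm_inv]; positivity, ?_⟩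
    rw [norm_inv]
    rw [inv_le_comm₀ hnu h2δ]
    exact hu
  have hΦd : ∀ u : ℂ, r₀ ≤ ‖u‖ → DifferentiableAt ℂ Φ u := by
    intro u hu
    have h1 := (hφ u⁻¹ (hinv u hu)).differentiableAt
    exact h1.comp u (differentiableAt_id.inv (hne0 u hu))
  -- differentiability of the Cauchy integrand
  have hvd : ∀ (u v : ℂ), r₀ ≤ ‖v‖ → u ≠ v →
      DifferentiableAt ℂ (fun w => (w - u)⁻¹ • Φ w) v := by
    intro u v hv hne
    have : DifferentiableAt ℂ (fun w : ℂ => (w - u)⁻¹) v :=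
      (differentiableAt_id.sub_const u).inv (sub_ne_zero.mpr hne.symm)
    exact this.smul (hΦd v hv)
  set F : ℝ → ℂ → ℂ :=
    fun ρ u => (2 * ↑Real.pi * I)⁻¹ • ∮ v in C(0, ρ), (v - u)⁻¹ • Φ v with hFdef
  -- independence of radius
  have hFind : ∀ ρ₁ ρ₂ : ℝ, r₀ ≤ ρ₁ → ρ₁ ≤ ρ₂ → ∀ u : ℂ, ‖u‖ < ρ₁ → F ρ₁ u = F ρ₂ u := by
    intro ρ₁ ρ₂ h1 h2 u hu
    have h0 : 0 < ρ₁ := lt_of_lt_of_le hr₀ h1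
    have hcd : ∀ v ∈ closedBall (0 : ℂ) ρ₂ \ ball (0 : ℂ) ρ₁,
        DifferentiableAt ℂ (fun w => (w - u)⁻¹ • Φ w) v := by
      intro v hv
      have hv1 : ρ₁ ≤ ‖v‖ := by
        have := hv.2
        rw [mem_ball_zero_iff] at this
        linarith [not_lt.mp this]
      exact hvd u v (le_trans h1 hv1) (by intro h; rw [h] at hu; linarith)
    have := Complex.circleIntegral_eq_of_differentiable_on_annulus_off_countable
      (c := 0) (r := ρ₁) (R := ρ₂) h0 h2 (s := (∅ : Set ℂ)) Set.countable_empty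
      (f := fun w => (w - u)⁻¹ • Φ w)
      (fun v hv => (hcd v hv).continuousAt.continuousWithinAt)
      (fun v hv => hcd v ⟨ball_subset_closedBall hv.1.1, fun h =>
        hv.1.2 (ball_subset_closedBall h)⟩)
    simp only [hFdef]
    rw [this]
  have hB : ∀ (ρ : ℝ) (u : ℂ), r₀ ≤ ρ → ‖u‖ < ρ → F (‖u‖ + r₀ + 1) u = F ρ u := by
    intro ρ u hρ hu
    have l1 : ‖u‖ < ‖u‖ + r₀ + 1 := by linarith
    have l2 : r₀ ≤ ‖u‖ + r₀ + 1 := by linarith [norm_nonneg u]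
    rcases le_total ρ (‖u‖ + r₀ + 1) with hcc | hcc
    · exact (hFind ρ _ hρ hcc u hu).symm
    · exact hFind _ ρ l2 hcc u l1
  set h : ℂ → ℂ := fun u => F (‖u‖ + r₀ + 1) u with hhdef
  have hcont : ∀ ρ : ℝ, r₀ ≤ ρ → CircleIntegrable Φ 0 ρ := by
    intro ρ hρ
    apply ContinuousOn.circleIntegrable (le_trans hr₀.le hρ)
    intro v hv
    rw [mem_sphere_zero_iff_norm] at hv
    exact (hΦd v (hv ▸ hρ)).continuousAt.continuousWithinAt
  have hFd : ∀ (ρ : ℝ) (u : ℂ), r₀ ≤ ρ → ‖u‖ < ρ → DifferentiableAt ℂ (F ρ) u := by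
    intro ρ u hρ hu
    have hρ0 : 0 < ρ := lt_of_lt_of_le hr₀ hρ
    have hci : CircleIntegrable Φ 0 (ρ.toNNReal : ℝ) := by
      rw [Real.coe_toNNReal _ hρ0.le]; exact hcont ρ hρ
    have hps := hasFPowerSeriesOn_cauchy_integral (f := Φ) (c := 0) (R := ρ.toNNReal)
      hci (by simpa using hρ0)
    have hdo := hps.differentiableOn
    have hmem : u ∈ Metric.eball (0 : ℂ) ρ.toNNReal := by
      rw [Metric.eball_coe, mem_ball_zero_iff, Real.coe_toNNReal _ hρ0.le]
      exact hu
    have := hdo.differentiableAt (Metric.isOpen_eball.mem_nhds hmem)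
    simp only [Real.coe_toNNReal _ hρ0.le] at this
    exact this
  have hEnt : Differentiable ℂ h := by
    intro u₀
    set ρ : ℝ := ‖u₀‖ + r₀ + 1 with hρdef
    have hρ : r₀ ≤ ρ := by simp only [hρdef]; linarith [norm_nonneg u₀]
    have hu₀ : ‖u₀‖ < ρ := by simp only [hρdef]; linarith
    have heq : h =ᶠ[nhds u₀] F ρ := by
      filter_upwards [isOpen_ball.mem_nhds (mem_ball_zero_iff.mpr hu₀)] with u hu
      exact hB ρ u hρ (mem_ball_zero_iff.mp hu)
    exact (Filter.EventuallyEq.differentiableAt_iff heq).mpr (hFd ρ u₀ hρ hu₀)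
  have twopiI_ne : (2 * ↑Real.pi * I : ℂ) ≠ 0 := by
    simp [Real.pi_ne_zero, Complex.I_ne_zero]
  have hD : ∀ u : ℂ, r₀ < ‖u‖ → Φ u = h u - F r₀ u := by
    intro u hu
    set ρ : ℝ := ‖u‖ + r₀ + 1 with hρdef
    have hρ : r₀ ≤ ρ := by simp only [hρdef]; linarith [norm_nonneg u]
    have huρ : ‖u‖ < ρ := by simp only [hρdef]; linarith
    have hρ0 : 0 < ρ := lt_of_lt_of_le hr₀ hρ
    -- dslope integrals over both circles are equal
    have hgeq : (∮ v in C(0, ρ), dslope Φ u v) = ∮ v in C(0, r₀), dslope Φ u v := by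
      apply Complex.circleIntegral_eq_of_differentiable_on_annulus_off_countable
        (c := 0) hr₀ hρ (s := {u}) (Set.countable_singleton u)
      · intro v hv
        have hv1 : r₀ ≤ ‖v‖ := by
          have := hv.2
          rw [mem_ball_zero_iff] at this
          linarith [not_lt.mp this]
        rcases eq_or_ne v u with rfl | hne
        · exact (continuousAt_dslope_same.mpr (hΦd v hv1)).continuousWithinAt
        · exact ((continuousAt_dslope_of_ne hne).mpr
            (hΦd v hv1).continuousAt).continuousWithinAt
      · intro v hv
        have hv1 : r₀ ≤ ‖v‖ := by
          have := hv.1.2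
          rw [mem_closedBall_zero_iff] at this
          linarith [not_le.mp this]
        have hne : v ≠ u := by
          intro hvu
          exact hv.2 (by simp [hvu])
        exact (differentiableAt_dslope_of_ne hne).mpr (hΦd v hv1)
    -- expand the dslope integrals
    have hexp : ∀ r : ℝ, r₀ ≤ r → ∀ hru : ∀ v ∈ sphere (0:ℂ) r, v ≠ u,
        (∮ v in C(0, r), dslope Φ u v) =
        (∮ v in C(0, r), (v - u)⁻¹ • Φ v) - (∮ v in C(0, r), (v - u)⁻¹) • Φ u := by
      intro r hr hru
      have hr0 : 0 < r := lt_of_lt_of_le hr₀ hr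
      have e1 : (∮ v in C(0, r), dslope Φ u v)
          = ∮ v in C(0, r), ((v - u)⁻¹ • Φ v - (v - u)⁻¹ • Φ u) := by
        apply circleIntegral.integral_congr hr0.le
        intro v hv
        rw [dslope_of_ne Φ (hru v hv), slope_def_module, smul_sub]
      rw [e1]
      rw [circleIntegral.integral_sub, circleIntegral.integral_smul_const]
      · apply ContinuousOn.circleIntegrable hr0.le
        intro v hv
        have hv1 : r₀ ≤ ‖v‖ := by rw [mem_sphere_zero_iff_norm] at hv; linarith
        exact (hvd u v hv1 (fun hh => hru v hv hh.symm)).continuousAt.continuousWithinAt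
      · apply ContinuousOn.circleIntegrable hr0.le
        intro v hv
        exact (((continuousAt_id.sub continuousAt_const).inv₀
          (sub_ne_zero.mpr (hru v hv))).smul continuousAt_const).continuousWithinAt
    have hρne : ∀ v ∈ sphere (0:ℂ) ρ, v ≠ u := by
      intro v hv
      rw [mem_sphere_zero_iff_norm] at hv
      intro hh; rw [hh] at hv; linarith
    have hr₀ne : ∀ v ∈ sphere (0:ℂ) r₀, v ≠ u := by
      intro v hv
      rw [mem_sphere_zero_iff_norm] at hv
      intro hh; rw [hh] at hv; linarith
    have hbig : (∮ v in C(0, ρ), (v - u)⁻¹) = 2 * ↑Real.pi * I :=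
      circleIntegral.integral_sub_inv_of_mem_ball (mem_ball_zero_iff.mpr huρ)
    have hsmall : (∮ v in C(0, r₀), (v - u)⁻¹) = 0 := by
      apply Complex.circleIntegral_eq_zero_of_differentiable_on_off_countable hr₀.le
        (Set.countable_empty)
      · intro v hv
        have : v ≠ u := by
          intro hh
          rw [mem_closedBall_zero_iff, hh] at hv
          linarith
        exact ((continuousAt_id.sub continuousAt_const).inv₀
          (sub_ne_zero.mpr this)).continuousWithinAt
      · intro v hv
        have : v ≠ u := by
          intro hh
          rw [Set.mem_diff, mem_ball_zero_iff, hh] at hv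
          linarith [hv.1]
        exact (differentiableAt_id.sub_const u).inv (sub_ne_zero.mpr this)
    have key : (2 * ↑Real.pi * I : ℂ) • Φ u =
        (∮ v in C(0, ρ), (v - u)⁻¹ • Φ v) - ∮ v in C(0, r₀), (v - u)⁻¹ • Φ v := by
      have E1 := hexp ρ hρ hρne
      have E2 := hexp r₀ le_rfl hr₀ne
      rw [E1, E2, hbig, hsmall] at hgeq
      simp only [zero_smul, sub_zero] at hgeq
      rw [smul_eq_mul] at hgeq ⊢
      linear_combination -hgeq
    have : Φ u = F ρ u - F r₀ u := by
      have := congrArg (fun w => (2 * ↑Real.pi * I : ℂ)⁻¹ • w) key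
      rw [inv_smul_smul₀ twopiI_ne, smul_sub] at this
      exact this
    rw [this, (hB ρ u hρ huρ : h u = F ρ u)]
  -- bound on the sphere of radius r₀
  obtain ⟨M₀, hM₀⟩ := (isCompact_sphere (0:ℂ) r₀).exists_bound_of_continuousOn
    (f := Φ) (fun v hv =>
      (hΦd v (mem_sphere_zero_iff_norm.mp hv).ge).continuousAt.continuousWithinAt)
  have hM₀0 : (0:ℝ) ≤ max M₀ 0 := le_max_right _ _
  have hE : ∀ u : ℂ, 2 * r₀ ≤ ‖u‖ → ‖F r₀ u‖ ≤ max M₀ 0 := by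
    intro u hu
    have hb : ∀ v ∈ sphere (0:ℂ) r₀, ‖(v - u)⁻¹ • Φ v‖ ≤ r₀⁻¹ * max M₀ 0 := by
      intro v hv
      have hvn : ‖v‖ = r₀ := mem_sphere_zero_iff_norm.mp hv
      have h1 : r₀ ≤ ‖v - u‖ := by
        calc r₀ = 2 * r₀ - r₀ := by ring
        _ ≤ ‖u‖ - ‖v‖ := by rw [hvn]; linarith
        _ ≤ ‖u - v‖ := norm_sub_norm_le u v
        _ = ‖v - u‖ := norm_sub_rev u v
      rw [norm_smul, norm_inv]
      have hM : ‖Φ v‖ ≤ max M₀ 0 := le_trans (hM₀ v hv) (le_max_left _ _)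
      have h2 : ‖v - u‖⁻¹ ≤ r₀⁻¹ := by
        apply inv_anti₀ hr₀ h1
      exact mul_le_mul h2 hM (norm_nonneg _) (by positivity)
    have hI := circleIntegral.norm_integral_le_of_norm_le_const hr₀.le hb
    have hn2 : ‖(2 * ↑Real.pi * I : ℂ)⁻¹‖ = (2 * Real.pi)⁻¹ := by
      rw [norm_inv, norm_mul, norm_mul, Complex.norm_I, mul_one, Complex.norm_real]
      simp [_root_.abs_of_nonneg Real.pi_pos.le]
    have : ‖F r₀ u‖ = ‖(2 * ↑Real.pi * I : ℂ)⁻¹‖ * ‖∮ v in C(0, r₀), (v - u)⁻¹ • Φ v‖ := by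
      simp only [hFdef]
      rw [norm_smul]
    rw [this, hn2]
    calc (2 * Real.pi)⁻¹ * ‖∮ v in C(0, r₀), (v - u)⁻¹ • Φ v‖
        ≤ (2 * Real.pi)⁻¹ * (2 * Real.pi * r₀ * (r₀⁻¹ * max M₀ 0)) := by
          apply mul_le_mul_of_nonneg_left hI
          have := Real.pi_pos
          positivity
    _ = max M₀ 0 := by
          field_simp
  obtain ⟨M₁, hM₁⟩ := (isCompact_closedBall (0:ℂ) (2*r₀)).exists_bound_of_continuousOn
    (hEnt.continuous.continuousOn (s := closedBall 0 (2*r₀)))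
  set M₂ : ℝ := max M₀ 0 + max M₁ 0 with hM₂def
  have hM₂0 : 0 ≤ M₂ := by
    simp only [hM₂def]
    have := le_max_right M₁ (0:ℝ)
    linarith
  have hRe : ∀ u : ℂ, (h u).re ≤ c * ‖u‖ ^ κ + M₂ := by
    intro u
    have hcnn : 0 ≤ c * ‖u‖ ^ κ := mul_nonneg hc (Real.rpow_nonneg (norm_nonneg u) κ)
    rcases le_or_gt ‖u‖ (2*r₀) with hcase | hcase
    · have h1 : (h u).re ≤ ‖h u‖ := by
        exact Complex.re_le_norm _
      have h2 : ‖h u‖ ≤ M₁ := hM₁ u (mem_closedBall_zero_iff.mpr hcase)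
      have h3 : M₁ ≤ max M₁ 0 := le_max_left _ _
      simp only [hM₂def]
      linarith [le_max_right M₀ (0:ℝ), le_max_right M₁ (0:ℝ), hM₀0]
    · have hu : r₀ < ‖u‖ := by linarith
      have hh : h u = Φ u + F r₀ u := by rw [hD u hu]; ring
      have hre1 : (Φ u).re ≤ c * ‖u‖ ^ κ := by
        have h1 := hre u⁻¹ (hinv u hu.le).1 (hinv u hu.le).2
        rw [norm_inv, Real.inv_rpow (norm_nonneg u), div_eq_mul_inv, inv_inv] at h1
        exact h1
      have hre2 : (F r₀ u).re ≤ max M₀ 0 := by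
        have h1 : (F r₀ u).re ≤ ‖F r₀ u‖ := by
          exact Complex.re_le_norm _
        exact le_trans h1 (hE u (by linarith))
      rw [hh, Complex.add_re]
      simp only [hM₂def]
      linarith [le_max_right M₁ (0:ℝ)]
  -- final assembly
  refine ⟨min δ 1, 2*c*(2:ℝ)^κ + 3*‖h 0‖ + 2*M₂ + 2 + max M₀ 0, lt_min hδ one_pos, ?_⟩
  intro z hz0 hzδ
  have hz : z ≠ 0 := norm_pos_iff.mp hz0
  have hun : ‖z⁻¹‖ = ‖z‖⁻¹ := norm_inv z
  have hz1 : ‖z‖ ≤ 1 := le_trans hzδ (min_le_right _ _)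
  have hzd : ‖z‖ ≤ δ := le_trans hzδ (min_le_left _ _)
  have hu1 : 1 ≤ ‖z⁻¹‖ := by
    rw [hun]
    rw [le_inv_comm₀ one_pos hz0]
    simpa using hz1
  have hu0 : 0 < ‖z⁻¹‖ := by linarith
  have hu2 : 2*r₀ ≤ ‖z⁻¹‖ := by
    have e1 : 2*r₀ = δ⁻¹ := by rw [hr₀def]; field_simp
    rw [e1, hun]
    exact inv_anti₀ hz0 hzd
  have hur : r₀ < ‖z⁻¹‖ := by linarith
  set A : ℝ := c * (2*‖z⁻¹‖)^κ + M₂ + ‖h 0‖ + 1 with hAdef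
  have hrp0 : (0:ℝ) ≤ (2*‖z⁻¹‖)^κ := Real.rpow_nonneg (by positivity) κ
  have hA : 0 < A := by
    simp only [hAdef]
    nlinarith [norm_nonneg (h 0), mul_nonneg hc hrp0]
  have hrevA : ∀ v : ℂ, ‖v‖ < 2 * ‖z⁻¹‖ → ((fun v => h v - h 0) v).re < A := by
    intro v hv
    have h1 := hRe v
    have hmono : ‖v‖^κ ≤ (2*‖z⁻¹‖)^κ := Real.rpow_le_rpow (norm_nonneg v) hv.le hκ
    have h2 : |(h 0).re| ≤ ‖h 0‖ := by
      exact Complex.abs_re_le_norm _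
    have h3 := mul_le_mul_of_nonneg_left hmono hc
    simp only [Complex.sub_re, hAdef]
    have h4 := abs_le.mp h2
    linarith
  have hbc := bc_aux (h := fun v => h v - h 0) (hEnt.sub_const _) (r := ‖z⁻¹‖) hu0 hA
    hrevA (by simp) z⁻¹ le_rfl
  have hhu : ‖h z⁻¹‖ ≤ ‖h 0‖ + 2*A := by
    have t := norm_add_le (h z⁻¹ - h 0) (h 0)
    simp only [sub_add_cancel] at t
    linarith [hbc]
  have hΦu : Φ z⁻¹ = φ z := by simp only [hΦdef, inv_inv]
  have hval : ‖φ z‖ ≤ ‖h 0‖ + 2*A + max M₀ 0 := by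
    have hform := hD z⁻¹ hur
    rw [hΦu] at hform
    calc ‖φ z‖ = ‖h z⁻¹ - F r₀ z⁻¹‖ := by rw [hform]
    _ ≤ ‖h z⁻¹‖ + ‖F r₀ z⁻¹‖ := norm_sub_le _ _
    _ ≤ (‖h 0‖ + 2*A) + max M₀ 0 := add_le_add hhu (hE z⁻¹ hu2)
  have hr1 : (2*‖z⁻¹‖)^κ = (2:ℝ)^κ * ‖z⁻¹‖^κ := Real.mul_rpow (by norm_num) (norm_nonneg _)
  have hk1 : ‖z⁻¹‖^κ ≤ ‖z⁻¹‖^(κ+1) :=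
    Real.rpow_le_rpow_of_exponent_le hu1 (by linarith)
  have hk2 : 1 ≤ ‖z⁻¹‖^(κ+1) := by
    simpa using Real.rpow_le_rpow_of_exponent_le hu1 (show (0:ℝ) ≤ κ+1 by linarith)
  have h2κ : (0:ℝ) ≤ (2:ℝ)^κ := Real.rpow_nonneg (by norm_num) κ
  have hfinal : ‖φ z‖ ≤ (2*c*(2:ℝ)^κ + 3*‖h 0‖ + 2*M₂ + 2 + max M₀ 0) * ‖z⁻¹‖^(κ+1) := by
    rw [hAdef, hr1] at hval
    have t1 : 2*(c*(2:ℝ)^κ)*‖z⁻¹‖^κ ≤ 2*(c*(2:ℝ)^κ)*‖z⁻¹‖^(κ+1) :=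
      mul_le_mul_of_nonneg_left hk1 (by positivity)
    have t2 : (3*‖h 0‖ + 2*M₂ + 2 + max M₀ 0) * 1
        ≤ (3*‖h 0‖ + 2*M₂ + 2 + max M₀ 0) * ‖z⁻¹‖^(κ+1) :=
      mul_le_mul_of_nonneg_left hk2 (by positivity)
    nlinarith [norm_nonneg (h 0)]
  have hzp : ‖z⁻¹‖^(κ+1) = (‖z‖^(κ+1))⁻¹ := by
    rw [hun, Real.inv_rpow (norm_nonneg z)]
  rw [div_eq_mul_inv, ← hzp]
  exact hfinal
end

section
/- Ax–Hermite–Lindemann: let $K$ be a differential field of characteristic zero with derivation $D$ and constant field $C$. Let $\xi \in K$ and $\hat\xi \in K$, $\hat\xi \neq 0$, satisfy $D\xi = D\hat\xi / \hat\xi$, and suppose $\xi \notin C$. Then $\xi$ and $\hat\xi$ are algebraically independent over $C$. -/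
open Polynomial

set_option maxHeartbeats 1000000

/-- Ax–Hermite–Lindemann: in a differential field `K` of characteristic zero with
derivation `D` and constant subfield `C`, if `ξ, ξ̂ ∈ K` with `ξ̂ ≠ 0`,
`D ξ = D ξ̂ / ξ̂` and `ξ ∉ C`, then `ξ` and `ξ̂` are algebraically independent over `C`. -/
theorem ax_hermite_lindemann (K : Type*) [Field K] [CharZero K] (D : K → K)
    (hadd : ∀ x y : K, D (x + y) = D x + D y)
    (hmul : ∀ x y : K, D (x * y) = x * D y + D x * y)
    (C : Subfield K) (hC : ∀ x : K, x ∈ C ↔ D x = 0)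
    (ξ ξh : K) (hξh : ξh ≠ 0) (hD : D ξ = D ξh / ξh) (hξ : ξ ∉ C) :
    AlgebraicIndependent C ![ξ, ξh] := by
  classical
  haveI : CharZero C := ⟨fun a b h => by
    have h2 := congrArg (algebraMap C K) h
    rw [map_natCast, map_natCast] at h2
    exact Nat.cast_injective h2⟩
  have hC' : ∀ c : C, D (c : K) = 0 := fun c => (hC c).1 c.2
  have hD1 : D (1 : K) = 0 := by
    have h := hmul 1 1
    rw [mul_one, one_mul, mul_one] at h
    exact left_eq_add.mp h
  have hD0 : D (0 : K) = 0 := by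
    have h := hadd 0 0
    rw [add_zero] at h
    exact left_eq_add.mp h
  let Dl : K →ₗ[C] K :=
    { toFun := D
      map_add' := hadd
      map_smul' := fun c x => by
        have hs : c • x = (c : K) * x := rfl
        have hs2 : c • D x = (c : K) * D x := rfl
        simp only [RingHom.id_apply, hs, hs2, hmul, hC' c, zero_mul, add_zero]
    }
  let Dd : Derivation C K K :=
    { toLinearMap := Dl
      map_one_eq_zero' := hD1
      leibniz' := fun a b => by
        show D (a * b) = a • D b + b • D a
        rw [smul_eq_mul, smul_eq_mul, hmul]
        ring }
  have hDd : ∀ x : K, Dd x = D x := fun _ => rfl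
  have hDξ : D ξ ≠ 0 := fun h => hξ ((hC ξ).2 h)
  have hDξh : D ξh = ξh * D ξ := by rw [hD]; field_simp
  -- ξ is transcendental over C
  have htξ : Transcendental C ξ := by
    intro halg
    have hint : IsIntegral C ξ := halg.isIntegral
    have h1 := Dd.map_aeval (minpoly C ξ) ξ
    rw [minpoly.aeval, map_zero, smul_eq_mul, hDd] at h1
    have h2 : Polynomial.aeval ξ (derivative (minpoly C ξ)) = 0 :=
      (mul_eq_zero.mp h1.symm).resolve_right hDξ
    have h3 : derivative (minpoly C ξ) = 0 := by
      by_contra hne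
      exact absurd (minpoly.degree_le_of_ne_zero C ξ hne h2)
        (not_le.mpr (degree_derivative_lt (minpoly.ne_zero hint)))
    exact absurd (natDegree_eq_zero_of_derivative_eq_zero h3) (minpoly.natDegree_pos hint).ne'
  have haeI : Function.Injective (Polynomial.aeval ξ : C[X] →ₐ[C] K) :=
    transcendental_iff_injective.mp htξ
  -- the intermediate field C(ξ)
  have hξF : ξ ∈ IntermediateField.adjoin C ({ξ} : Set K) :=
    IntermediateField.mem_adjoin_simple_self C ξ
  -- quotient rule
  have hDdiv : ∀ x y : K, y ≠ 0 → D (x / y) = (D x * y - x * D y) / (y * y) := by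
    intro x y hy
    have h1 : x / y * y = x := div_mul_cancel₀ x hy
    have h2 := hmul (x / y) y
    rw [h1] at h2
    have h3 : D (x / y) * y = D x - x / y * D y := by linear_combination -h2
    rw [eq_div_iff (mul_ne_zero hy hy)]
    linear_combination y * h3 - D y * h1
  -- aeval derivative rule
  have hDaeval : ∀ p : C[X], D (Polynomial.aeval ξ p) =
      Polynomial.aeval ξ (derivative p) * D ξ := by
    intro p
    have h1 := Dd.map_aeval p ξ
    rwa [smul_eq_mul, hDd, hDd] at h1
  -- derivatives of elements of C(ξ) are multiples of D ξ by elements of C(ξ)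
  have hDF : ∀ a : K, a ∈ IntermediateField.adjoin C ({ξ} : Set K) →
      ∃ b : K, b ∈ IntermediateField.adjoin C ({ξ} : Set K) ∧ D a = b * D ξ := by
    intro a ha
    obtain ⟨p, q, hpq⟩ := (IntermediateField.mem_adjoin_simple_iff C a).mp ha
    by_cases hq : Polynomial.aeval ξ q = 0
    · exact ⟨0, (IntermediateField.adjoin C ({ξ} : Set K)).zero_mem,
        by rw [hpq, hq, div_zero, hD0, zero_mul]⟩
    · refine ⟨Polynomial.aeval ξ (derivative p * q - p * derivative q) /
        Polynomial.aeval ξ (q * q), ?_, ?_⟩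
      · exact (IntermediateField.mem_adjoin_simple_iff C _).mpr ⟨_, _, rfl⟩
      · rw [hpq, hDdiv _ _ hq, hDaeval, hDaeval]
        simp only [map_mul, map_sub]
        field_simp
  -- reduce to transcendence of ξh over C(ξ)
  suffices htr : Transcendental (Algebra.adjoin C (Set.range (fun _ : Unit => ξ))) ξh by
    have h1 : AlgebraicIndependent C (fun _ : Unit => ξ) :=
      algebraicIndependent_unique_type_iff.mpr htξ
    have h2 := (h1.option_iff_transcendental ξh).mpr htr
    have h3 := h2.comp (![Option.some (), Option.none] : Fin 2 → Option Unit) (by decide)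
    have he : ((fun o : Option Unit => o.elim ξh fun _ => ξ) ∘
        (![Option.some (), Option.none] : Fin 2 → Option Unit)) = ![ξ, ξh] := by
      funext i
      fin_cases i <;> rfl
    rwa [he] at h3
  intro halg0
  -- transfer algebraicity to the intermediate field
  have halg : IsAlgebraic (IntermediateField.adjoin C ({ξ} : Set K)) ξh := by
    obtain ⟨p, hp0, hpe⟩ := halg0
    have hSF : ∀ s : Algebra.adjoin C (Set.range (fun _ : Unit => ξ)),
        (s : K) ∈ IntermediateField.adjoin C ({ξ} : Set K) := by
      intro s
      have h1 : Algebra.adjoin C (Set.range (fun _ : Unit => ξ)) ≤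
          (IntermediateField.adjoin C ({ξ} : Set K)).toSubalgebra := by
        apply Algebra.adjoin_le
        rintro x ⟨_, rfl⟩
        exact hξF
      exact h1 s.2
    let j : Algebra.adjoin C (Set.range (fun _ : Unit => ξ)) →+*
        IntermediateField.adjoin C ({ξ} : Set K) :=
      RingHom.codRestrict (algebraMap _ K) _ hSF
    have hjinj : Function.Injective j := fun a b h => by
      apply Subtype.ext
      have := congrArg (fun z : IntermediateField.adjoin C ({ξ} : Set K) => (z : K)) h
      exact this
    refine ⟨p.map j, (Polynomial.map_ne_zero_iff hjinj).mpr hp0, ?_⟩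
    rw [Polynomial.aeval_def, Polynomial.eval₂_map]
    have hcomp : (algebraMap (IntermediateField.adjoin C ({ξ} : Set K)) K).comp j =
        algebraMap (Algebra.adjoin C (Set.range (fun _ : Unit => ξ))) K :=
      RingHom.ext fun s => rfl
    rw [hcomp, ← Polynomial.aeval_def, hpe]
  -- minimal polynomial of ξh over C(ξ)
  have hint : IsIntegral (IntermediateField.adjoin C ({ξ} : Set K)) ξh := halg.isIntegral
  set F := IntermediateField.adjoin C ({ξ} : Set K) with hFdef
  set m : F[X] := minpoly F ξh with hmdef
  have hm0 : m ≠ 0 := minpoly.ne_zero hint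
  set n : ℕ := m.natDegree with hndef
  have hn : 0 < n := minpoly.natDegree_pos hint
  have hmonic : m.Monic := minpoly.monic hint
  -- choose the b i
  have hbex : ∀ i : ℕ, ∃ bK : K, bK ∈ F ∧ D ((m.coeff i : K)) = bK * D ξ :=
    fun i => hDF _ (m.coeff i).2
  choose b hbF hbD using hbex
  -- power rule for ξh
  have hpow : ∀ i : ℕ, D (ξh ^ i) = (i : K) * ξh ^ i * D ξ := by
    intro i
    induction i with
    | zero => simp [hD1]
    | succ i ih =>
      rw [pow_succ, hmul (ξh ^ i) ξh, hDξh, ih]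
      push_cast
      ring
  let Dh : K →+ K := AddMonoidHom.mk' D hadd
  have hDh : ∀ x : K, Dh x = D x := fun _ => rfl
  -- expansion of aeval ξh m
  have key0 : Polynomial.aeval ξh m = ∑ i ∈ Finset.range (n + 1), (m.coeff i : K) * ξh ^ i := by
    rw [Polynomial.aeval_eq_sum_range]
    exact Finset.sum_congr rfl fun i _ => by rw [Algebra.smul_def]; rfl
  have key1 : (∑ i ∈ Finset.range (n + 1),
      (b i + (i : K) * (m.coeff i : K)) * ξh ^ i) * D ξ = 0 := by
    have h1 : D (Polynomial.aeval ξh m) = 0 := by rw [minpoly.aeval]; exact hD0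
    rw [key0] at h1
    have h2 : D (∑ i ∈ Finset.range (n + 1), (m.coeff i : K) * ξh ^ i)
        = ∑ i ∈ Finset.range (n + 1), D ((m.coeff i : K) * ξh ^ i) := map_sum Dh _ _
    rw [h2] at h1
    rw [Finset.sum_mul, ← h1]
    refine Finset.sum_congr rfl fun i _ => ?_
    rw [hmul, hpow, hbD]
    ring
  have key2 : b n = 0 := by
    have h1 := hbD n
    rw [hmonic.coeff_natDegree, OneMemClass.coe_one, hD1] at h1
    exact (mul_eq_zero.mp h1.symm).resolve_right hDξ
  have key3 : ∑ i ∈ Finset.range n, (m.coeff i : K) * ξh ^ i = -ξh ^ n := by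
    have h1 : (0 : K) = ∑ i ∈ Finset.range (n + 1), (m.coeff i : K) * ξh ^ i := by
      rw [← key0, minpoly.aeval]
    rw [Finset.sum_range_succ, hmonic.coeff_natDegree, OneMemClass.coe_one, one_mul] at h1
    exact eq_neg_of_add_eq_zero_left h1.symm
  have hS : ∑ i ∈ Finset.range (n + 1), (b i + (i : K) * (m.coeff i : K)) * ξh ^ i = 0 :=
    (mul_eq_zero.mp key1).resolve_right hDξ
  have key4 : ∑ i ∈ Finset.range n, (b i + (i : K) * (m.coeff i : K)) * ξh ^ i
      = -((n : K) * ξh ^ n) := by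
    rw [Finset.sum_range_succ, key2, hmonic.coeff_natDegree, OneMemClass.coe_one] at hS
    have h1 := eq_neg_of_add_eq_zero_left hS
    rw [h1]
    ring_nf
  -- the auxiliary polynomial of degree < n
  set Q : F[X] := ∑ i ∈ Finset.range n,
      Polynomial.C ((⟨b i, hbF i⟩ : F) + ((i : F) - (n : F)) * m.coeff i) * Polynomial.X ^ i
    with hQdef
  have haQ : Polynomial.aeval ξh Q = 0 := by
    rw [hQdef, map_sum]
    have hterm : ∀ i ∈ Finset.range n,
        Polynomial.aeval ξh (Polynomial.C ((⟨b i, hbF i⟩ : F) + ((i : F) - (n : F)) * m.coeff i)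
          * Polynomial.X ^ i)
        = (b i + ((i : K) - (n : K)) * (m.coeff i : K)) * ξh ^ i := by
      intro i _
      rw [map_mul, Polynomial.aeval_C, map_pow, Polynomial.aeval_X]
      congr 1
    rw [Finset.sum_congr rfl hterm]
    have hsplit : ∑ i ∈ Finset.range n, (b i + ((i : K) - (n : K)) * (m.coeff i : K)) * ξh ^ i
        = (∑ i ∈ Finset.range n, (b i + (i : K) * (m.coeff i : K)) * ξh ^ i)
          - (n : K) * ∑ i ∈ Finset.range n, (m.coeff i : K) * ξh ^ i := by
      rw [Finset.mul_sum, ← Finset.sum_sub_distrib]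
      exact Finset.sum_congr rfl fun i _ => by ring
    rw [hsplit, key4, key3]
    ring
  have hdQ : Q.degree < m.degree := by
    rw [Polynomial.degree_eq_natDegree hm0]
    refine lt_of_le_of_lt (Polynomial.degree_sum_le _ _) ?_
    rw [Finset.sup_lt_iff (by exact_mod_cast WithBot.bot_lt_coe n)]
    intro i hi
    exact lt_of_le_of_lt (Polynomial.degree_C_mul_X_pow_le _ _)
      (by exact_mod_cast Finset.mem_range.mp hi)
  have hQ0 : Q = 0 := by
    by_contra hne
    exact absurd (minpoly.degree_le_of_ne_zero F ξh hne haQ) (not_le.mpr hdQ)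
  have hcoeff : ∀ i, i < n →
      (⟨b i, hbF i⟩ : F) + ((i : F) - (n : F)) * m.coeff i = 0 := by
    intro i hi
    have h1 : Q.coeff i = 0 := by rw [hQ0]; simp
    rw [hQdef, Polynomial.finset_sum_coeff] at h1
    simp only [Polynomial.coeff_C_mul, Polynomial.coeff_X_pow, mul_ite, mul_one, mul_zero,
      Finset.sum_ite_eq, Finset.mem_range, hi, if_true] at h1
    exact h1
  -- some lower coefficient of m is nonzero
  have hex : ∃ i, i < n ∧ m.coeff i ≠ 0 := by
    by_contra hall
    push_neg at hall
    have hmX : m = Polynomial.X ^ n := by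
      ext j
      rcases lt_trichotomy j n with hj | hj | hj
      · rw [hall j hj, Polynomial.coeff_X_pow, if_neg hj.ne]
      · rw [hj, hmonic.coeff_natDegree, Polynomial.coeff_X_pow, if_pos rfl]
      · rw [Polynomial.coeff_eq_zero_of_natDegree_lt hj, Polynomial.coeff_X_pow, if_neg hj.ne']
    have h1 := minpoly.aeval F ξh
    rw [← hmdef, hmX, map_pow, Polynomial.aeval_X] at h1
    exact hξh (pow_eq_zero_iff hn.ne' |>.mp h1)
  obtain ⟨i, hi, hci⟩ := hex
  have hbeq : b i = ((n : K) - (i : K)) * (m.coeff i : K) := by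
    have h1 := hcoeff i hi
    have h2 := congrArg (algebraMap F K) h1
    simp only [map_add, map_mul, map_sub, map_natCast, map_zero,
      IntermediateField.algebraMap_apply] at h2
    linear_combination h2
  have hda : D ((m.coeff i : K)) = ((n : K) - (i : K)) * (m.coeff i : K) * D ξ := by
    rw [hbD i, hbeq]
  obtain ⟨p, q, hpq⟩ :=
    (IntermediateField.mem_adjoin_simple_iff C ((m.coeff i : K))).mp (m.coeff i).2
  have hc0 : ((m.coeff i : K)) ≠ 0 := fun h => hci (by exact_mod_cast h)
  have hq0 : Polynomial.aeval ξ q ≠ 0 := fun h => hc0 (by rw [hpq, h, div_zero])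
  have hp0 : Polynomial.aeval ξ p ≠ 0 := fun h => hc0 (by rw [hpq, h, zero_div])
  have hpne : p ≠ 0 := fun h => hp0 (by rw [h, map_zero])
  have hqne : q ≠ 0 := fun h => hq0 (by rw [h, map_zero])
  set k : ℕ := n - i with hk
  have hkpos : 0 < k := Nat.sub_pos_of_lt hi
  have hnk : ((n : K) - (i : K)) = (k : K) := by
    rw [hk, Nat.cast_sub hi.le]
  have hkey : D ((m.coeff i : K)) =
      Polynomial.aeval ξ (derivative p * q - p * derivative q) /
        (Polynomial.aeval ξ q * Polynomial.aeval ξ q) * D ξ := by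
    rw [hpq, hDdiv _ _ hq0, hDaeval, hDaeval]
    simp only [map_mul, map_sub]
    field_simp
  have hEqK : Polynomial.aeval ξ (derivative p * q - p * derivative q)
      = Polynomial.aeval ξ ((k : Polynomial C) * (p * q)) := by
    have h1 : Polynomial.aeval ξ (derivative p * q - p * derivative q) /
          (Polynomial.aeval ξ q * Polynomial.aeval ξ q) * D ξ
        = (k : K) * (Polynomial.aeval ξ p / Polynomial.aeval ξ q) * D ξ := by
      rw [← hkey, hda, hnk, hpq]
    have h2 := mul_right_cancel₀ hDξ h1
    field_simp at h2
    have h3 : ((Polynomial.aeval ξ) (derivative p) * (Polynomial.aeval ξ) q -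
          (Polynomial.aeval ξ) p * (Polynomial.aeval ξ) (derivative q)) * (Polynomial.aeval ξ) q
        = ((k : K) * (Polynomial.aeval ξ) p * (Polynomial.aeval ξ) q) * (Polynomial.aeval ξ) q := by
      simp only [map_mul, map_sub] at h2
      linear_combination (Polynomial.aeval ξ q) * h2
    have h4 := mul_right_cancel₀ hq0 h3
    simp only [map_mul, map_sub, map_natCast]
    linear_combination h4
  have hpoly : derivative p * q - p * derivative q = (k : Polynomial C) * (p * q) := haeI hEqK
  have hkC : ((k : C) : C) ≠ 0 := Nat.cast_ne_zero.mpr hkpos.ne'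
  have hdegL : (derivative p * q - p * derivative q).degree < p.degree + q.degree := by
    refine lt_of_le_of_lt (Polynomial.degree_sub_le _ _) ?_
    rw [max_lt_iff]
    constructor
    · rw [Polynomial.degree_mul]
      exact WithBot.add_lt_add_right (fun h => hqne (Polynomial.degree_eq_bot.mp h))
        (degree_derivative_lt hpne)
    · rw [Polynomial.degree_mul]
      exact WithBot.add_lt_add_left (fun h => hpne (Polynomial.degree_eq_bot.mp h))
        (degree_derivative_lt hqne)
  have hdegR : ((k : Polynomial C) * (p * q)).degree = p.degree + q.degree := by
    rw [← Polynomial.C_eq_natCast, Polynomial.degree_mul, Polynomial.degree_mul,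
      Polynomial.degree_C (Nat.cast_ne_zero.mpr hkpos.ne'), zero_add]
  rw [hpoly, hdegR] at hdegL
  exact lt_irrefl _ hdegL
end

section
/- The Zariski closure of the set $\{(z, 1-z, e^z, e^{1-z}) : z \in \mathbf{C}\}$ in $\mathbf{C}^2 \times \mathbf{C}^{*2}$ is the surface defined by $X_1 + X_2 = 1$ and $\hat X_1 \hat X_2 = e$; equivalently, every polynomial $G(X_1, X_2, \hat X_1, \hat X_2)$ vanishing at $(z, 1-z, e^z, e^{1-z})$ for all $z \in \mathbf{C}$ lies in the ideal generated by $X_1 + X_2 - 1$ and $\hat X_1 \hat X_2 - e$. -/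
open MvPolynomial

private lemma eval_aeval_poly (f : Fin 2 → Polynomial ℂ) (P : MvPolynomial (Fin 2) ℂ) (z : ℂ) :
    Polynomial.eval z (MvPolynomial.aeval f P) = MvPolynomial.eval (fun i => (f i).eval z) P := by
  rw [MvPolynomial.aeval_def]
  show (Polynomial.evalRingHom z) (eval₂ (algebraMap ℂ (Polynomial ℂ)) f P) = _
  rw [MvPolynomial.eval₂_comp_left (Polynomial.evalRingHom z)]
  have hcomp : (Polynomial.evalRingHom z).comp (algebraMap ℂ (Polynomial ℂ)) = RingHom.id ℂ := by
    ext a; simp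
  rw [hcomp, MvPolynomial.eval₂_id]
  rfl

private lemma indep (P : MvPolynomial (Fin 2) ℂ)
    (h : ∀ z : ℂ, MvPolynomial.eval ![z, Complex.exp z] P = 0) : P = 0 := by
  have key : ∀ z w : ℂ, MvPolynomial.eval ![z, w] P = 0 := by
    have step1 : ∀ w : ℂ, w ≠ 0 → ∀ z : ℂ, MvPolynomial.eval ![z, w] P = 0 := by
      intro w hw z
      set q : Polynomial ℂ := MvPolynomial.aeval ![Polynomial.X, Polynomial.C w] P with hq
      have hqe : ∀ t : ℂ, q.eval t = MvPolynomial.eval ![t, w] P := by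
        intro t
        have hfun : (fun i => Polynomial.eval t (![Polynomial.X, Polynomial.C w] i)) = ![t, w] := by
          funext i; fin_cases i <;> simp
        rw [hq, eval_aeval_poly, hfun]
      have hq0 : q = 0 := by
        apply Polynomial.eq_zero_of_infinite_isRoot
        apply Set.infinite_of_injective_forall_mem
          (f := fun n : ℕ => Complex.log w + n * (2 * Real.pi * Complex.I))
        · intro a b hab
          have hc : (2 * (Real.pi : ℂ) * Complex.I) ≠ 0 := by
            simp [Real.pi_ne_zero, Complex.I_ne_zero]
          have hab' := add_left_cancel hab
          have := mul_right_cancel₀ hc hab'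
          exact_mod_cast this
        · intro n
          simp only [Set.mem_setOf_eq, Polynomial.IsRoot]
          rw [hqe]
          have hexp : Complex.exp (Complex.log w + n * (2 * Real.pi * Complex.I)) = w := by
            rw [Complex.exp_add, Complex.exp_log hw, Complex.exp_nat_mul,
              Complex.exp_two_pi_mul_I, one_pow, mul_one]
          have h' := h (Complex.log w + n * (2 * Real.pi * Complex.I))
          rw [hexp] at h'
          exact h'
      rw [← hqe z, hq0, Polynomial.eval_zero]
    intro z w
    set r : Polynomial ℂ := MvPolynomial.aeval ![Polynomial.C z, Polynomial.X] P with hr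
    have hre : ∀ t : ℂ, r.eval t = MvPolynomial.eval ![z, t] P := by
      intro t
      have hfun : (fun i => Polynomial.eval t (![Polynomial.C z, Polynomial.X] i)) = ![z, t] := by
        funext i; fin_cases i <;> simp
      rw [hr, eval_aeval_poly, hfun]
    have hr0 : r = 0 := by
      apply Polynomial.eq_zero_of_infinite_isRoot
      apply Set.Infinite.mono (s := {0}ᶜ)
      · intro t ht
        simp only [Set.mem_setOf_eq, Polynomial.IsRoot]
        rw [hre]
        exact step1 t ht z
      · exact Set.Finite.infinite_compl (Set.finite_singleton 0)
    rw [← hre w, hr0, Polynomial.eval_zero]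
  apply MvPolynomial.funext (q := 0)
  intro x
  have hx : ![x 0, x 1] = x := by funext i; fin_cases i <;> rfl
  have := key (x 0) (x 1)
  rw [hx] at this
  simpa using this

private lemma reduce (G : MvPolynomial (Fin 4) ℂ) :
    ∃ (N : ℕ) (P : MvPolynomial (Fin 2) ℂ),
      (X 2) ^ N * G - rename ![0, 2] P ∈ Ideal.span ({X 0 + X 1 - C 1,
        X 2 * X 3 - C (Complex.exp 1)} : Set (MvPolynomial (Fin 4) ℂ)) := by
  set I := Ideal.span ({X 0 + X 1 - C 1,
        X 2 * X 3 - C (Complex.exp 1)} : Set (MvPolynomial (Fin 4) ℂ)) with hI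
  have hg1 : (X 0 + X 1 - C 1 : MvPolynomial (Fin 4) ℂ) ∈ I :=
    Ideal.subset_span (Set.mem_insert _ _)
  have hg2 : (X 2 * X 3 - C (Complex.exp 1) : MvPolynomial (Fin 4) ℂ) ∈ I :=
    Ideal.subset_span (Set.mem_insert_of_mem _ rfl)
  induction G using MvPolynomial.induction_on with
  | C a =>
    refine ⟨0, C a, ?_⟩
    simp
  | add p q hp hq =>
    obtain ⟨N₁, P₁, h₁⟩ := hp
    obtain ⟨N₂, P₂, h₂⟩ := hq
    refine ⟨N₁ + N₂, (X 1) ^ N₂ * P₁ + (X 1) ^ N₁ * P₂, ?_⟩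
    have key : (X 2 : MvPolynomial (Fin 4) ℂ) ^ (N₁ + N₂) * (p + q)
        - rename ![0, 2] ((X 1) ^ N₂ * P₁ + (X 1) ^ N₁ * P₂)
        = (X 2) ^ N₂ * ((X 2) ^ N₁ * p - rename ![0, 2] P₁)
          + (X 2) ^ N₁ * ((X 2) ^ N₂ * q - rename ![0, 2] P₂) := by
      simp only [map_add, map_mul, map_pow, rename_X]
      have h12 : (![0, 2] : Fin 2 → Fin 4) 1 = 2 := rfl
      rw [h12]
      ring
    rw [key]
    exact I.add_mem (I.mul_mem_left _ h₁) (I.mul_mem_left _ h₂)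
  | mul_X p i hp =>
    obtain ⟨N, P, h⟩ := hp
    fin_cases i
    · refine ⟨N, P * X 0, ?_⟩
      show (X 2 : MvPolynomial (Fin 4) ℂ) ^ N * (p * X 0) - rename ![0, 2] (P * X 0) ∈ I
      have key : (X 2 : MvPolynomial (Fin 4) ℂ) ^ N * (p * X 0) - rename ![0, 2] (P * X 0)
          = X 0 * ((X 2) ^ N * p - rename ![0, 2] P) := by
        simp only [map_mul, rename_X]
        have h10 : (![0, 2] : Fin 2 → Fin 4) 0 = 0 := rfl
        rw [h10]; ring
      rw [key]
      exact I.mul_mem_left _ h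
    · refine ⟨N, P * (C 1 - X 0), ?_⟩
      show (X 2 : MvPolynomial (Fin 4) ℂ) ^ N * (p * X 1) - rename ![0, 2] (P * (C 1 - X 0)) ∈ I
      have key : (X 2 : MvPolynomial (Fin 4) ℂ) ^ N * (p * X 1) - rename ![0, 2] (P * (C 1 - X 0))
          = X 1 * ((X 2) ^ N * p - rename ![0, 2] P)
            + rename ![0, 2] P * (X 0 + X 1 - C 1) := by
        simp only [map_mul, map_sub, rename_X, rename_C]
        have h10 : (![0, 2] : Fin 2 → Fin 4) 0 = 0 := rfl
        rw [h10]; ring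
      rw [key]
      exact I.add_mem (I.mul_mem_left _ h) (I.mul_mem_left _ hg1)
    · refine ⟨N, P * X 1, ?_⟩
      show (X 2 : MvPolynomial (Fin 4) ℂ) ^ N * (p * X 2) - rename ![0, 2] (P * X 1) ∈ I
      have key : (X 2 : MvPolynomial (Fin 4) ℂ) ^ N * (p * X 2) - rename ![0, 2] (P * X 1)
          = X 2 * ((X 2) ^ N * p - rename ![0, 2] P) := by
        simp only [map_mul, rename_X]
        have h12 : (![0, 2] : Fin 2 → Fin 4) 1 = 2 := rfl
        rw [h12]; ring
      rw [key]
      exact I.mul_mem_left _ h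
    · refine ⟨N + 1, C (Complex.exp 1) * P, ?_⟩
      show (X 2 : MvPolynomial (Fin 4) ℂ) ^ (N + 1) * (p * X 3)
          - rename ![0, 2] (C (Complex.exp 1) * P) ∈ I
      have key : (X 2 : MvPolynomial (Fin 4) ℂ) ^ (N + 1) * (p * X 3)
          - rename ![0, 2] (C (Complex.exp 1) * P)
          = X 2 * X 3 * ((X 2) ^ N * p - rename ![0, 2] P)
            + rename ![0, 2] P * (X 2 * X 3 - C (Complex.exp 1)) := by
        simp only [map_mul, rename_C]
        ring
      rw [key]
      exact I.add_mem (I.mul_mem_left _ h) (I.mul_mem_left _ hg2)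

/-- Every polynomial `G(X₁, X₂, X̂₁, X̂₂)` vanishing at `(z, 1-z, e^z, e^(1-z))` for all
`z ∈ ℂ` lies in the ideal generated by `X₁ + X₂ - 1` and `X̂₁ X̂₂ - e`; i.e. the Zariski
closure of `{(z, 1-z, e^z, e^(1-z)) : z ∈ ℂ}` is the surface `X₁ + X₂ = 1`, `X̂₁ X̂₂ = e`. -/
theorem zariski_closure_of_exp_line (G : MvPolynomial (Fin 4) ℂ)
    (hG : ∀ z : ℂ, MvPolynomial.eval
      ![z, 1 - z, Complex.exp z, Complex.exp (1 - z)] G = 0) :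
    G ∈ Ideal.span ({X 0 + X 1 - C 1,
      X 2 * X 3 - C (Complex.exp 1)} : Set (MvPolynomial (Fin 4) ℂ)) := by
  set I := Ideal.span ({X 0 + X 1 - C 1,
      X 2 * X 3 - C (Complex.exp 1)} : Set (MvPolynomial (Fin 4) ℂ)) with hI
  obtain ⟨N, P, hmem⟩ := reduce G
  have heval : ∀ z : ℂ, ∀ f ∈ I,
      MvPolynomial.eval ![z, 1 - z, Complex.exp z, Complex.exp (1 - z)] f = 0 := by
    intro z f hf
    have hle : I ≤ RingHom.ker (MvPolynomial.eval
        ![z, 1 - z, Complex.exp z, Complex.exp (1 - z)]) := by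
      rw [hI, Ideal.span_le]
      rintro g (rfl | rfl)
      · simp [RingHom.mem_ker]
      · simp [RingHom.mem_ker, ← Complex.exp_add]
    exact hle hf
  have hP : P = 0 := by
    apply indep
    intro z
    have h1 := heval z _ hmem
    have hfun : (![z, 1 - z, Complex.exp z, Complex.exp (1 - z)] ∘ ![0, 2]) = ![z, Complex.exp z] := by
      funext i; fin_cases i <;> rfl
    have h2 : MvPolynomial.eval ![z, 1 - z, Complex.exp z, Complex.exp (1 - z)]
        (rename ![0, 2] P) = MvPolynomial.eval ![z, Complex.exp z] P := by
      rw [MvPolynomial.eval_rename, hfun]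
    simp only [map_sub, map_mul, map_pow] at h1
    rw [h2, hG z] at h1
    simpa using h1
  rw [hP] at hmem
  simp only [map_zero, sub_zero] at hmem
  have he : (Complex.exp 1) ≠ 0 := Complex.exp_ne_zero 1
  have hy : (1 : MvPolynomial (Fin 4) ℂ) - C (Complex.exp 1)⁻¹ * (X 2 * X 3) ∈ I := by
    have h1 : (C (Complex.exp 1)⁻¹ : MvPolynomial (Fin 4) ℂ) * C (Complex.exp 1) = 1 := by
      rw [← C_mul, inv_mul_cancel₀ he, C_1]
    have heq : (1 : MvPolynomial (Fin 4) ℂ) - C (Complex.exp 1)⁻¹ * (X 2 * X 3)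
        = (- C (Complex.exp 1)⁻¹) * (X 2 * X 3 - C (Complex.exp 1)) := by
      linear_combination -h1
    rw [heq]
    exact Ideal.mul_mem_left _ _ (Ideal.subset_span (Set.mem_insert_of_mem _ rfl))
  have hpow : (1 : MvPolynomial (Fin 4) ℂ) - (C (Complex.exp 1)⁻¹ * (X 2 * X 3)) ^ N ∈ I := by
    obtain ⟨s, hs⟩ := sub_dvd_pow_sub_pow (1 : MvPolynomial (Fin 4) ℂ)
      (C (Complex.exp 1)⁻¹ * (X 2 * X 3)) N
    rw [one_pow] at hs
    rw [hs]
    exact Ideal.mul_mem_right _ _ hy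
  have decomp : G = (C (Complex.exp 1)⁻¹ * X 3) ^ N * ((X 2) ^ N * G)
      + ((1 : MvPolynomial (Fin 4) ℂ) - (C (Complex.exp 1)⁻¹ * (X 2 * X 3)) ^ N) * G := by
    ring
  rw [decomp]
  exact I.add_mem (I.mul_mem_left _ hmem) (I.mul_mem_right _ hpow)
end

section
/- Suppose $\Phi$ and $\phi$ are analytic functions on $\{z : 0 < |z|\}$ with $e^z + e^{1/z} - 1 = \Phi(z)$ and $\Phi(z) = z^m e^{\phi(z)}$ for some integer $m$, where $\Phi$ never vanishes. Then $\phi$ cannot be of the form $\phi(z) = a z^2 + b z + c + d/z + e'/z^2$ for complex constants $a, b, c, d, e'$. -/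
open Complex Filter Topology

/-- `c / x ^ n → 0` as `x → ∞`. -/
private lemma aux_tendsto_const_div_pow (c : ℝ) (n : ℕ) (hn : n ≠ 0) :
    Tendsto (fun x : ℝ => c / x ^ n) atTop (𝓝 0) :=
  tendsto_const_nhds.div_atTop (tendsto_pow_atTop hn)

/-- `log x / x → 0` as `x → ∞`. -/
private lemma aux_log_div : Tendsto (fun x : ℝ => Real.log x / x) atTop (𝓝 0) := by
  simpa using Real.isLittleO_log_id_atTop.tendsto_div_nhds_zero

/-- `log x / x² → 0` as `x → ∞`. -/
private lemma aux_log_div_sq : Tendsto (fun x : ℝ => Real.log x / x ^ 2) atTop (𝓝 0) := by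
  have h := aux_log_div.mul tendsto_inv_atTop_zero
  rw [mul_zero] at h
  refine h.congr ?_
  intro x
  rw [← div_eq_mul_inv, div_div, ← pow_two]

/-- If a real "Laurent polynomial plus log" tends to `0` at infinity,
its non-decaying coefficients vanish. -/
private lemma aux_key (A B M C D E : ℝ)
    (h : Tendsto (fun x : ℝ => A * x ^ 2 + B * x + M * Real.log x + C + D / x + E / x ^ 2)
      atTop (𝓝 0)) :
    A = 0 ∧ B = 0 ∧ M = 0 ∧ C = 0 := by
  -- Step 1: A = 0
  have hA : A = 0 := by
    have h1 : Tendsto (fun x : ℝ =>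
        (A * x ^ 2 + B * x + M * Real.log x + C + D / x + E / x ^ 2) / x ^ 2)
        atTop (𝓝 0) := h.div_atTop (tendsto_pow_atTop two_ne_zero)
    have h2 : Tendsto (fun x : ℝ =>
        A + B / x + M * (Real.log x / x ^ 2) + C / x ^ 2 + D / x ^ 3 + E / x ^ 4)
        atTop (𝓝 (A + 0 + M * 0 + 0 + 0 + 0)) := by
      have hB1 : Tendsto (fun x : ℝ => B / x) atTop (𝓝 0) := by
        simpa using aux_tendsto_const_div_pow B 1 one_ne_zero
      exact ((((tendsto_const_nhds.add hB1).add (aux_log_div_sq.const_mul M)).add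
        (aux_tendsto_const_div_pow C 2 two_ne_zero)).add
        (aux_tendsto_const_div_pow D 3 (by norm_num))).add
        (aux_tendsto_const_div_pow E 4 (by norm_num))
    have h2' : Tendsto (fun x : ℝ =>
        (A * x ^ 2 + B * x + M * Real.log x + C + D / x + E / x ^ 2) / x ^ 2)
        atTop (𝓝 A) := by
      have : A + 0 + M * 0 + 0 + 0 + 0 = A := by ring
      rw [this] at h2
      refine h2.congr' ?_
      filter_upwards [eventually_gt_atTop (0:ℝ)] with x hx
      field_simp
    exact tendsto_nhds_unique h2' h1
  subst hA
  -- Step 2: B = 0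
  have hB : B = 0 := by
    have h1 : Tendsto (fun x : ℝ =>
        (0 * x ^ 2 + B * x + M * Real.log x + C + D / x + E / x ^ 2) / x)
        atTop (𝓝 0) := h.div_atTop tendsto_id
    have h2 : Tendsto (fun x : ℝ =>
        B + M * (Real.log x / x) + C / x + D / x ^ 2 + E / x ^ 3)
        atTop (𝓝 (B + M * 0 + 0 + 0 + 0)) := by
      have hC1 : Tendsto (fun x : ℝ => C / x) atTop (𝓝 0) := by
        simpa using aux_tendsto_const_div_pow C 1 one_ne_zero
      exact (((tendsto_const_nhds.add (aux_log_div.const_mul M)).add hC1).add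
        (aux_tendsto_const_div_pow D 2 two_ne_zero)).add
        (aux_tendsto_const_div_pow E 3 (by norm_num))
    have h2' : Tendsto (fun x : ℝ =>
        (0 * x ^ 2 + B * x + M * Real.log x + C + D / x + E / x ^ 2) / x)
        atTop (𝓝 B) := by
      have : B + M * 0 + 0 + 0 + 0 = B := by ring
      rw [this] at h2
      refine h2.congr' ?_
      filter_upwards [eventually_gt_atTop (0:ℝ)] with x hx
      field_simp
      ring
    exact tendsto_nhds_unique h2' h1
  subst hB
  -- Step 3: M * log x → -C
  have hrest : Tendsto (fun x : ℝ => M * Real.log x) atTop (𝓝 (-C)) := by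
    have h2 : Tendsto (fun x : ℝ => C + D / x + E / x ^ 2) atTop (𝓝 C) := by
      have hD1 : Tendsto (fun x : ℝ => D / x) atTop (𝓝 0) := by
        simpa using aux_tendsto_const_div_pow D 1 one_ne_zero
      have h4 : Tendsto (fun x : ℝ => C + D / x + E / x ^ 2) atTop (𝓝 (C + 0 + 0)) :=
        (tendsto_const_nhds.add hD1).add (aux_tendsto_const_div_pow E 2 two_ne_zero)
      simpa using h4
    have h3 := h.sub h2
    rw [zero_sub] at h3
    refine h3.congr ?_
    intro x; ring
  have hM : M = 0 := by
    by_contra hM0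
    rcases lt_or_gt_of_ne hM0 with hneg | hpos
    · have : Tendsto (fun x : ℝ => (-M) * Real.log x) atTop atTop :=
        Real.tendsto_log_atTop.const_mul_atTop (by linarith)
      exact not_tendsto_atTop_of_tendsto_nhds
        (by simpa [neg_mul] using hrest.neg) this
    · have : Tendsto (fun x : ℝ => M * Real.log x) atTop atTop :=
        Real.tendsto_log_atTop.const_mul_atTop hpos
      exact not_tendsto_atTop_of_tendsto_nhds hrest this
  subst hM
  have hC : C = 0 := by
    have : (0:ℝ) * Real.log 1 = -C := by
      have h0 : Tendsto (fun _ : ℝ => (0:ℝ) * Real.log 1) atTop (𝓝 (0 * Real.log 1)) :=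
        tendsto_const_nhds
      have := tendsto_nhds_unique (hrest.congr (fun x => by ring)) h0
      linarith [this]
    simp at this
    linarith
  exact ⟨rfl, rfl, rfl, hC⟩

private lemma aux_pos (x : ℝ) (hx : 0 < x) : 0 < Real.exp x + Real.exp x⁻¹ - 1 := by
  nlinarith [Real.add_one_le_exp x, Real.exp_pos x⁻¹]

/-- Asymptotics of `log(e^x + e^{1/x} - 1)` at infinity. -/
private lemma aux_log_asymp :
    Tendsto (fun x : ℝ => Real.log (Real.exp x + Real.exp x⁻¹ - 1) - x) atTop (𝓝 0) := by
  have ha : Tendsto (fun x : ℝ => Real.exp x⁻¹ - 1) atTop (𝓝 0) := by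
    have h1 : Tendsto (fun x : ℝ => Real.exp x⁻¹) atTop (𝓝 1) := by
      have := Real.continuous_exp.continuousAt (x := (0:ℝ)).tendsto.comp tendsto_inv_atTop_zero
      simpa [Function.comp_def] using this
    simpa using h1.sub (tendsto_const_nhds (x := (1:ℝ)))
  have hb : Tendsto (fun x : ℝ => (Real.exp x)⁻¹) atTop (𝓝 0) := by
    have := Real.tendsto_exp_atBot.comp tendsto_neg_atTop_atBot
    refine this.congr ?_
    intro x; simp [Real.exp_neg]
  have h1 : Tendsto (fun x : ℝ => (Real.exp x + Real.exp x⁻¹ - 1) / Real.exp x)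
      atTop (𝓝 1) := by
    have h2 := tendsto_const_nhds (x := (1:ℝ)) (f := atTop (α := ℝ)) |>.add (ha.mul hb)
    rw [mul_zero, add_zero] at h2
    refine h2.congr ?_
    intro x
    field_simp [Real.exp_ne_zero]
    ring
  have h2 : Tendsto (fun x : ℝ => Real.log ((Real.exp x + Real.exp x⁻¹ - 1) / Real.exp x))
      atTop (𝓝 0) := by
    have := (Real.continuousAt_log one_ne_zero).tendsto.comp h1
    simpa [Function.comp_def] using this
  refine h2.congr' ?_
  filter_upwards [eventually_gt_atTop (0:ℝ)] with x hx
  rw [Real.log_div (ne_of_gt (aux_pos x hx)) (Real.exp_ne_zero x), Real.log_exp]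

/-- From the real-axis identity, extract the coefficient constraints. -/
private lemma aux_main_real (M A B C D E : ℝ)
    (h : ∀ x : ℝ, 0 < x → Real.log (Real.exp x + Real.exp x⁻¹ - 1)
        = M * Real.log x + A * x ^ 2 + B * x + C + D / x + E / x ^ 2) :
    A = 0 ∧ B = 1 ∧ M = 0 ∧ C = 0 := by
  have ht : Tendsto (fun x : ℝ =>
      A * x ^ 2 + (B - 1) * x + M * Real.log x + C + D / x + E / x ^ 2) atTop (𝓝 0) := by
    refine aux_log_asymp.congr' ?_
    filter_upwards [eventually_gt_atTop (0:ℝ)] with x hx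
    rw [h x hx]; ring
  obtain ⟨hA, hB, hM, hC⟩ := aux_key A (B - 1) M C D E ht
  exact ⟨hA, by linarith, hM, hC⟩

/-- If `Φ(z) = e^z + e^(1/z) - 1` admits a factorization `Φ(z) = z^m e^(φ z)` on
`ℂ \ {0}` with `Φ` never vanishing there and `φ` analytic there, then `φ` cannot be of
the form `a z² + b z + c + d/z + e'/z²`. -/
theorem no_laurent_quadratic_exponent (m : ℤ) (Φ φ : ℂ → ℂ)
    (hΦdef : ∀ z : ℂ, z ≠ 0 → Φ z = Complex.exp z + Complex.exp (1 / z) - 1)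
    (hΦa : AnalyticOnNhd ℂ Φ {z : ℂ | z ≠ 0})
    (hφa : AnalyticOnNhd ℂ φ {z : ℂ | z ≠ 0})
    (hne : ∀ z : ℂ, z ≠ 0 → Φ z ≠ 0)
    (hfac : ∀ z : ℂ, z ≠ 0 → Φ z = z ^ m * Complex.exp (φ z)) :
    ¬ ∃ a b c d e' : ℂ, ∀ z : ℂ, z ≠ 0 →
      φ z = a * z ^ 2 + b * z + c + d / z + e' / z ^ 2 := by
  rintro ⟨a, b, c, d, e', hq⟩
  -- the identity along the positive real axis, after taking `log ∘ abs`
  have hreal : ∀ x : ℝ, 0 < x → Real.log (Real.exp x + Real.exp x⁻¹ - 1)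
      = (m : ℝ) * Real.log x + a.re * x ^ 2 + b.re * x + c.re + d.re / x + e'.re / x ^ 2 := by
    intro x hx
    have hx0 : (x : ℂ) ≠ 0 := by exact_mod_cast ne_of_gt hx
    have h1 : ((Real.exp x + Real.exp x⁻¹ - 1 : ℝ) : ℂ)
        = (x : ℂ) ^ m * Complex.exp (φ (x : ℂ)) := by
      rw [← hfac _ hx0, hΦdef _ hx0]
      push_cast [Complex.ofReal_exp]
      ring
    have habs : (Real.exp x + Real.exp x⁻¹ - 1)
        = x ^ m * Real.exp ((φ (x : ℂ)).re) := by
      have := congrArg (‖·‖) h1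
      rwa [Complex.norm_real, Real.norm_eq_abs, abs_of_pos (aux_pos x hx), norm_mul,
        norm_zpow, Complex.norm_real, Real.norm_eq_abs, abs_of_pos hx,
        Complex.norm_exp] at this
    have hre : (φ (x : ℂ)).re
        = a.re * x ^ 2 + b.re * x + c.re + d.re / x + e'.re / x ^ 2 := by
      rw [hq _ hx0]
      have e0 : a * (x : ℂ) ^ 2 + b * (x : ℂ) + c + d / (x : ℂ) + e' / ((x : ℂ)) ^ 2
          = ((x ^ 2 : ℝ) : ℂ) * a + ((x : ℝ) : ℂ) * b + c + ((x⁻¹ : ℝ) : ℂ) * d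
            + (((x ^ 2)⁻¹ : ℝ) : ℂ) * e' := by
        push_cast
        ring
      rw [e0]
      simp only [Complex.add_re, Complex.re_ofReal_mul]
      ring
    have hxm : 0 < (x : ℝ) ^ m := zpow_pos hx m
    rw [habs, Real.log_mul (ne_of_gt hxm) (Real.exp_ne_zero _), Real.log_zpow,
      Real.log_exp, hre]
    ring
  obtain ⟨hA, hB, hM, hC⟩ := aux_main_real (m : ℝ) a.re b.re c.re d.re e'.re hreal
  -- the inverted identity: substitute x ↦ x⁻¹
  have hreal' : ∀ x : ℝ, 0 < x → Real.log (Real.exp x + Real.exp x⁻¹ - 1)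
      = (-(m : ℝ)) * Real.log x + e'.re * x ^ 2 + d.re * x + c.re + b.re / x + a.re / x ^ 2 := by
    intro x hx
    have h2 := hreal x⁻¹ (by positivity)
    rw [inv_inv, Real.log_inv] at h2
    have hcomm : Real.exp x⁻¹ + Real.exp x - 1 = Real.exp x + Real.exp x⁻¹ - 1 := by ring
    rw [hcomm] at h2
    rw [h2]
    have hx0 : x ≠ 0 := ne_of_gt hx
    field_simp
    ring
  obtain ⟨hE, hD, -, -⟩ := aux_main_real (-(m : ℝ)) e'.re d.re c.re b.re a.re hreal'
  -- evaluate at z = 1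
  have h1 : ((2 * Real.exp 1 - 1 : ℝ) : ℂ) = Complex.exp (φ 1) := by
    have hone : (1 : ℂ) ≠ 0 := one_ne_zero
    have := hfac 1 hone
    rw [hΦdef 1 hone] at this
    rw [one_zpow, one_mul] at this
    rw [← this]
    push_cast [Complex.ofReal_exp]
    norm_num
    ring
  have hφ1 : (φ 1).re = 2 := by
    have hsum : φ 1 = a + b + c + d + e' := by
      rw [hq 1 one_ne_zero]; simp
    rw [hsum]
    simp [Complex.add_re, hA, hB, hC, hD, hE]
    norm_num
  have habs1 : 2 * Real.exp 1 - 1 = Real.exp 2 := by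
    have := congrArg (‖·‖) h1
    rw [Complex.norm_real, Real.norm_eq_abs, Complex.norm_exp, hφ1] at this
    rw [← this]
    rw [abs_of_pos]
    nlinarith [Real.add_one_le_exp (1:ℝ)]
  have hexp2 : Real.exp 2 = Real.exp 1 * Real.exp 1 := by
    rw [← Real.exp_add]; norm_num
  nlinarith [Real.add_one_le_exp (1:ℝ), habs1, hexp2, sq_nonneg (Real.exp 1 - 1)]
end
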